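/- arXiv:2207.03974 — 7 statements merged into one kernel-verified Lean document; each statement's English description precedes it below -/
import Mathlib

section
/- Let D be a digraph on n vertices containing no transitive cycle TC_k for any k ≥ 3. Then the number of edges of D is at most ⌊n²/4⌋ + 2. -/
set_option linter.unusedSectionVars false
open List

variable {V : Type}

section paths
variable {R : V → V → Prop}

/-- No "shortcut": there is no simple path with at least 3 vertices whose endpoints
are joined by an edge. -/
def SFree (R : V → V → Prop) : Prop :=
  ∀ l : List V, l.Chain' R → l.Nodup → 3 ≤ l.length →
    ∀ u v, l.head? = some u → l.getLast? = some v → ¬ R u v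

lemma chain_to_rtg : ∀ (l : List V) (u v : V), l.Chain' R → l.head? = some u →
    l.getLast? = some v → Relation.ReflTransGen R u v
  | [], u, v => by simp
  | [a], u, v => by
      simp only [head?_cons, Option.some_inj, getLast?_singleton]
      rintro _ rfl rfl; exact Relation.ReflTransGen.refl
  | a :: b :: t, u, v => by
      intro hc hh hl
      have h1 : R a b := (List.isChain_cons_cons.1 hc).1
      have h2 := chain_to_rtg (b :: t) b v (List.isChain_cons_cons.1 hc).2 rfl
        (by simpa using hl)
      simp only [head?_cons, Option.some_inj] at hh
      subst hh
      exact Relation.ReflTransGen.head h1 h2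

lemma rtg_to_chain {u v : V} (h : Relation.ReflTransGen R u v) :
    ∃ l : List V, l.Chain' R ∧ l.head? = some u ∧ l.getLast? = some v := by
  induction h with
  | refl => exact ⟨[u], by simp [List.Chain'], by simp, by simp⟩
  | @tail b c hab hbc ih =>
      obtain ⟨l, hc, hh, hl⟩ := ih
      refine ⟨l ++ [c], ?_, ?_, by simp⟩
      · refine List.isChain_append.2 ⟨hc, by simp, ?_⟩
        intro x hx y hy
        simp only [head?_cons, Option.mem_def, Option.some_inj] at hy
        rw [hl] at hx
        simp only [Option.mem_def, Option.some_inj] at hx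
        subst hx; subst hy; exact hbc
      · have : l ≠ [] := by rintro rfl; simp at hh
        rw [List.head?_append_of_ne_nil _ this]; exact hh

lemma mem_walk_rtg : ∀ (l : List V) (u v : V), l.Chain' R → l.head? = some u →
    l.getLast? = some v → ∀ x ∈ l, Relation.ReflTransGen R u x ∧ Relation.ReflTransGen R x v
  | [], u, v => by simp
  | a :: t, u, v => by
      intro hc hh hl x hx
      simp only [head?_cons, Option.some_inj] at hh
      subst hh
      rcases List.eq_nil_or_concat t with rfl | _
      · simp only [mem_singleton] at hx
        subst hx
        simp only [getLast?_singleton, Option.some_inj] at hl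
        subst hl; exact ⟨.refl, .refl⟩
      · have ht : t ≠ [] := by rintro rfl; simp_all
        obtain ⟨b, t', rfl⟩ : ∃ b t', t = b :: t' := by
          cases t with | nil => exact absurd rfl ht | cons b t' => exact ⟨b, t', rfl⟩
        have h1 : R a b := (List.isChain_cons_cons.1 hc).1
        have h2 : List.Chain' R (b :: t') := (List.isChain_cons_cons.1 hc).2
        have hl' : (b :: t').getLast? = some v := by simpa using hl
        rcases List.mem_cons.1 hx with rfl | hx'
        · exact ⟨.refl, chain_to_rtg _ _ _ hc rfl hl⟩
        · obtain ⟨r1, r2⟩ := mem_walk_rtg (b :: t') b v h2 rfl hl' x hx'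
          exact ⟨Relation.ReflTransGen.head h1 r1, r2⟩

lemma getLast?_drop' {l : List V} {n : ℕ} (h : n < l.length) :
    (l.drop n).getLast? = l.getLast? := by
  rw [getLast?_eq_getElem?, getLast?_eq_getElem?, List.getElem?_drop,
    List.length_drop]
  congr 1
  omega

lemma shorten : ∀ (l : List V), l.Chain' R → ∃ m : List V, m.Chain' R ∧ m.Nodup ∧
    m.head? = l.head? ∧ m.getLast? = l.getLast? ∧ ∀ x ∈ m, x ∈ l
  | [] => fun _ => ⟨[], by simp [List.Chain']⟩
  | x :: rest => by
      classical
      intro hc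
      obtain ⟨m', hc', hnd', hh', hl', hs'⟩ := shorten rest (List.isChain_cons.1 hc).2
      by_cases hx : x ∈ m'
      · have hm'len : m'.idxOf x < m'.length := List.idxOf_lt_length_iff.2 hx
        refine ⟨m'.drop (m'.idxOf x), hc'.drop _, hnd'.sublist (List.drop_sublist _ _),
          ?_, ?_, ?_⟩
        · rw [List.head?_drop]
          rw [List.getElem?_idxOf hx]
          have hrest : rest ≠ [] := by
            rintro rfl
            have := hs' x hx; simp_all
          rw [List.head?_cons]
        · rw [getLast?_drop' hm'len, hl']
          have hrest : rest ≠ [] := by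
            rintro rfl
            have := hs' x hx; simp_all
          rw [show x :: rest = [x] ++ rest from rfl,
            List.getLast?_append_of_ne_nil _ hrest]
        · intro y hy
          exact List.mem_cons_of_mem _ (hs' y (List.mem_of_mem_drop hy))
      · rcases List.eq_nil_or_concat rest with rfl | _
        · exact ⟨[x], by simp [List.Chain'], by simp, by simp, by simp, by simp⟩
        · have hrest : rest ≠ [] := by
            rintro rfl; simp_all
          have hm'ne : m' ≠ [] := by
            rintro rfl
            rw [List.head?_eq_none_iff.symm.mp rfl] at hh'
            exact hrest (List.head?_eq_none_iff.mp hh'.symm)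
          refine ⟨x :: m', ?_, List.nodup_cons.2 ⟨hx, hnd'⟩, by simp, ?_, ?_⟩
          · refine List.isChain_cons.2 ⟨?_, hc'⟩
            intro y hy
            rw [hh'] at hy
            exact (List.isChain_cons.1 hc).1 y hy
          · rw [show x :: m' = [x] ++ m' from rfl, List.getLast?_append_of_ne_nil _ hm'ne,
              show x :: rest = [x] ++ rest from rfl, List.getLast?_append_of_ne_nil _ hrest, hl']
          · intro y hy
            rcases List.mem_cons.1 hy with rfl | hy'
            · exact List.mem_cons_self
            · exact List.mem_cons_of_mem _ (hs' y hy')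

end paths
variable {V : Type}

section paths
variable {R : V → V → Prop}

lemma path_append {l1 l2 : List V} {u1 v1 u2 v2 : V}
    (h1 : l1.Chain' R) (h2 : l2.Chain' R) (n1 : l1.Nodup) (n2 : l2.Nodup)
    (hh1 : l1.head? = some u1) (hl1 : l1.getLast? = some v1)
    (hh2 : l2.head? = some u2) (hl2 : l2.getLast? = some v2)
    (hR : R v1 u2) (hd : ∀ x ∈ l1, x ∉ l2) :
    (l1 ++ l2).Chain' R ∧ (l1 ++ l2).Nodup ∧ (l1 ++ l2).head? = some u1 ∧
      (l1 ++ l2).getLast? = some v2 ∧ (l1 ++ l2).length = l1.length + l2.length := by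
  have hne1 : l1 ≠ [] := by rintro rfl; simp at hh1
  have hne2 : l2 ≠ [] := by rintro rfl; simp at hh2
  refine ⟨?_, ?_, ?_, ?_, by simp⟩
  · refine List.isChain_append.2 ⟨h1, h2, ?_⟩
    intro x hx y hy
    rw [hl1] at hx; rw [hh2] at hy
    simp only [Option.mem_def, Option.some_inj] at hx hy
    subst hx; subst hy; exact hR
  · exact List.nodup_append.2 ⟨n1, n2, fun a ha b hb hab => hd a ha (hab ▸ hb)⟩
  · rw [List.head?_append_of_ne_nil _ hne1]; exact hh1
  · rw [List.getLast?_append_of_ne_nil _ hne2]; exact hl2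

lemma two_le_length {l : List V} {u v : V} (hh : l.head? = some u)
    (hl : l.getLast? = some v) (huv : u ≠ v) : 2 ≤ l.length := by
  match l with
  | [] => simp at hh
  | [a] =>
      simp only [head?_cons, Option.some_inj] at hh
      simp only [getLast?_singleton, Option.some_inj] at hl
      exact absurd (hh.symm.trans hl) huv
  | a :: b :: t => simp [Nat.succ_le_succ, Nat.le_add_left]

end paths

section strong
variable (R : V → V → Prop)

/-- mutual reachability -/
def Sm (u v : V) : Prop := Relation.ReflTransGen R u v ∧ Relation.ReflTransGen R v u

def stR : Setoid V :=
  ⟨Sm R, ⟨fun _ => ⟨.refl, .refl⟩, fun h => ⟨h.2, h.1⟩,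
    fun h1 h2 => ⟨h1.1.trans h2.1, h2.2.trans h1.2⟩⟩⟩

open Classical in
noncomputable def tQ [Fintype V] : ℕ := Fintype.card (Quotient (stR R))

open Classical in
noncomputable def crossC [Fintype V] : ℕ :=
  (Finset.univ.filter (fun p : V × V => R p.1 p.2 ∧ ¬ Sm R p.1 p.2)).card

open Classical in
noncomputable def intC [Fintype V] : ℕ :=
  (Finset.univ.filter (fun p : V × V => R p.1 p.2 ∧ Sm R p.1 p.2)).card

variable {R}

lemma quot_mk_eq_iff {a b : V} : Quotient.mk (stR R) a = Quotient.mk (stR R) b ↔ Sm R a b :=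
  ⟨fun h => Quotient.exact h, fun h => Quotient.sound h⟩

/-- a simple path between equivalent vertices staying in their class -/
lemma cls_path {u v : V} (h : Sm R u v) :
    ∃ l : List V, l.Chain' R ∧ l.Nodup ∧ l.head? = some u ∧ l.getLast? = some v ∧
      ∀ x ∈ l, Sm R x u := by
  obtain ⟨l0, hc0, hh0, hl0⟩ := rtg_to_chain h.1
  obtain ⟨m, hc, hnd, hh, hl, hs⟩ := shorten l0 hc0
  refine ⟨m, hc, hnd, hh.trans hh0, hl.trans hl0, ?_⟩
  intro x hx
  obtain ⟨r1, r2⟩ := mem_walk_rtg l0 u v hc0 hh0 hl0 x (hs x hx)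
  exact ⟨r2.trans h.2, r1⟩

end strong
section mantel
variable {Q : Type} [Fintype Q] [DecidableEq Q]

lemma fiber_card_fst (F : Finset (Q × Q)) (X : Q) :
    (F.filter fun p => p.1 = X).card = (Finset.univ.filter fun Y => (X,Y) ∈ F).card := by
  apply Finset.card_bij (fun p _ => p.2)
  · intro p hp
    simp only [Finset.mem_filter] at hp ⊢
    refine ⟨Finset.mem_univ _, ?_⟩
    rw [← hp.2]
    simpa using hp.1
  · intro a ha b hb hab
    simp only [Finset.mem_filter] at ha hb
    exact Prod.ext (ha.2.trans hb.2.symm) hab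
  · intro b hb
    simp only [Finset.mem_filter] at hb
    exact ⟨(X, b), by simpa using hb.2, rfl⟩

lemma fiber_card_snd (F : Finset (Q × Q)) (X : Q) :
    (F.filter fun p => p.2 = X).card = (Finset.univ.filter fun Y => (Y,X) ∈ F).card := by
  apply Finset.card_bij (fun p _ => p.1)
  · intro p hp
    simp only [Finset.mem_filter] at hp ⊢
    refine ⟨Finset.mem_univ _, ?_⟩
    rw [← hp.2]
    simpa using hp.1
  · intro a ha b hb hab
    simp only [Finset.mem_filter] at ha hb
    exact Prod.ext hab (ha.2.trans hb.2.symm)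
  · intro b hb
    simp only [Finset.mem_filter] at hb
    exact ⟨(b, X), by simpa using hb.2, rfl⟩

lemma mantel_oriented (F : Finset (Q × Q))
    (hasym : ∀ p ∈ F, (p.2, p.1) ∉ F)
    (htri : ∀ a b c : Q, (a,b) ∈ F → (b,c) ∈ F → (a,c) ∉ F)
    (hcyc : ∀ a b c : Q, (a,b) ∈ F → (b,c) ∈ F → (c,a) ∉ F) :
    4 * F.card ≤ (Fintype.card Q)^2 := by
  set d : Q → ℕ := fun X => (Finset.univ.filter fun Y => (X,Y) ∈ F ∨ (Y,X) ∈ F).card with hd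
  set od : Q → ℕ := fun X => (Finset.univ.filter fun Y => (X,Y) ∈ F).card with hod
  set idg : Q → ℕ := fun X => (Finset.univ.filter fun Y => (Y,X) ∈ F).card with hidg
  have hsplit : ∀ X, d X = od X + idg X := by
    intro X
    rw [hd, hod, hidg]
    simp only
    rw [Finset.filter_or, Finset.card_union_of_disjoint]
    rw [Finset.disjoint_filter]
    intro Y _ h1 h2
    exact hasym _ h1 h2
  have hfibsum_fst : ∑ X, od X = F.card := by
    rw [Finset.card_eq_sum_card_fiberwise (f := Prod.fst) (t := Finset.univ)
      (fun p _ => Finset.mem_univ p.1)]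
    exact Finset.sum_congr rfl fun X _ => (fiber_card_fst F X).symm
  have hfibsum_snd : ∑ X, idg X = F.card := by
    rw [Finset.card_eq_sum_card_fiberwise (f := Prod.snd) (t := Finset.univ)
      (fun p _ => Finset.mem_univ p.2)]
    exact Finset.sum_congr rfl fun X _ => (fiber_card_snd F X).symm
  have hsum_d : ∑ X, d X = 2 * F.card := by
    calc ∑ X, d X = ∑ X, (od X + idg X) := Finset.sum_congr rfl fun X _ => hsplit X
    _ = F.card + F.card := by rw [Finset.sum_add_distrib, hfibsum_fst, hfibsum_snd]
    _ = 2 * F.card := by ring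
  have hdeg : ∀ p ∈ F, d p.1 + d p.2 ≤ Fintype.card Q := by
    rintro ⟨a, b⟩ hab
    have hdisj : Disjoint (Finset.univ.filter fun Y => (a,Y) ∈ F ∨ (Y,a) ∈ F)
        (Finset.univ.filter fun Y => (b,Y) ∈ F ∨ (Y,b) ∈ F) := by
      rw [Finset.disjoint_filter]
      rintro Y _ (h1 | h1) (h2 | h2)
      · exact htri a b Y hab h2 h1
      · exact htri a Y b h1 h2 hab
      · exact hcyc a b Y hab h2 h1
      · exact htri Y a b h1 hab h2
    calc d a + d b = ((Finset.univ.filter fun Y => (a,Y) ∈ F ∨ (Y,a) ∈ F) ∪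
        (Finset.univ.filter fun Y => (b,Y) ∈ F ∨ (Y,b) ∈ F)).card :=
        (Finset.card_union_of_disjoint hdisj).symm
    _ ≤ (Finset.univ : Finset Q).card := Finset.card_le_card (Finset.subset_univ _)
    _ = Fintype.card Q := Finset.card_univ
  have hsum_fst : ∑ p ∈ F, d p.1 = ∑ X, d X * od X := by
    have key := Finset.sum_fiberwise_eq_sum_filter F Finset.univ Prod.fst (fun p => d p.1)
    have key2 : F.filter (fun p => p.1 ∈ Finset.univ) = F := by simp
    rw [key2] at key
    rw [← key]
    refine Finset.sum_congr rfl fun X _ => ?_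
    have hcg : ∀ p ∈ F.filter fun p => p.1 = X, d p.1 = d X := by
      intro p hp
      simp only [Finset.mem_filter] at hp
      rw [hp.2]
    rw [Finset.sum_congr rfl hcg, Finset.sum_const, smul_eq_mul, fiber_card_fst, mul_comm]
  have hsum_snd : ∑ p ∈ F, d p.2 = ∑ X, d X * idg X := by
    have key := Finset.sum_fiberwise_eq_sum_filter F Finset.univ Prod.snd (fun p => d p.2)
    have key2 : F.filter (fun p => p.2 ∈ Finset.univ) = F := by simp
    rw [key2] at key
    rw [← key]
    refine Finset.sum_congr rfl fun X _ => ?_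
    have hcg : ∀ p ∈ F.filter fun p => p.2 = X, d p.2 = d X := by
      intro p hp
      simp only [Finset.mem_filter] at hp
      rw [hp.2]
    rw [Finset.sum_congr rfl hcg, Finset.sum_const, smul_eq_mul, fiber_card_snd, mul_comm]
  have hsq : ∑ X, (d X)^2 = ∑ p ∈ F, (d p.1 + d p.2) := by
    rw [Finset.sum_add_distrib, hsum_fst, hsum_snd, ← Finset.sum_add_distrib]
    refine Finset.sum_congr rfl fun X _ => ?_
    rw [← Nat.mul_add, ← hsplit, sq]
  have hsum_le : ∑ p ∈ F, (d p.1 + d p.2) ≤ F.card * Fintype.card Q := by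
    calc ∑ p ∈ F, (d p.1 + d p.2) ≤ ∑ _p ∈ F, Fintype.card Q :=
          Finset.sum_le_sum hdeg
    _ = F.card * Fintype.card Q := by rw [Finset.sum_const, smul_eq_mul]
  have hcs : (∑ X, d X)^2 ≤ Fintype.card Q * ∑ X, (d X)^2 := by
    have := sq_sum_le_card_mul_sum_sq (s := (Finset.univ : Finset Q)) (f := d)
    simpa using this
  rcases Nat.eq_zero_or_pos F.card with h0 | hpos
  · rw [h0]; exact Nat.zero_le _
  · have hchain : (2 * F.card)^2 ≤ Fintype.card Q * (F.card * Fintype.card Q) := by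
      rw [← hsum_d]
      exact hcs.trans (Nat.mul_le_mul_left _ (hsq.le.trans hsum_le))
    have h4 : 4 * F.card * F.card ≤ Fintype.card Q ^ 2 * F.card := by
      calc 4 * F.card * F.card = (2 * F.card)^2 := by ring
      _ ≤ Fintype.card Q * (F.card * Fintype.card Q) := hchain
      _ = Fintype.card Q ^2 * F.card := by ring
    exact Nat.le_of_mul_le_mul_right h4 hpos
end mantel
section crossbound
variable {R : V → V → Prop} [Fintype V]

open Classical in
noncomputable def crossS (R : V → V → Prop) [Fintype V] : Finset (V × V) :=
  Finset.univ.filter (fun p : V × V => R p.1 p.2 ∧ ¬ Sm R p.1 p.2)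

open Classical in
noncomputable def intS (R : V → V → Prop) [Fintype V] : Finset (V × V) :=
  Finset.univ.filter (fun p : V × V => R p.1 p.2 ∧ Sm R p.1 p.2)

lemma mem_crossS {p : V × V} : p ∈ crossS R ↔ R p.1 p.2 ∧ ¬ Sm R p.1 p.2 := by
  simp [crossS]

lemma mem_intS {p : V × V} : p ∈ intS R ↔ R p.1 p.2 ∧ Sm R p.1 p.2 := by
  simp [intS]

/-- glue a class path into `a`, the edge `(a,b)`, and a class path out of `b`. -/
lemma link_path {a b a' b' : V} (hR : R a b) (hab : ¬ Sm R a b)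
    (ha : Sm R a' a) (hb : Sm R b b') :
    ∃ l : List V, l.Chain' R ∧ l.Nodup ∧ l.head? = some a' ∧ l.getLast? = some b' ∧
      (∀ x ∈ l, Sm R x a ∨ Sm R x b) ∧ 2 ≤ l.length ∧
      (a' ≠ a → 3 ≤ l.length) ∧ (b' ≠ b → 3 ≤ l.length) := by
  obtain ⟨l1, c1, n1, hh1, hl1, hs1⟩ := cls_path ha
  obtain ⟨l2, c2, n2, hh2, hl2, hs2⟩ := cls_path hb
  have hd : ∀ x ∈ l1, x ∉ l2 := by
    intro x hx1 hx2
    have h1 : Sm R x a := (stR R).iseqv.trans (hs1 x hx1) ha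
    have h2 : Sm R x b := hs2 x hx2
    exact hab ((stR R).iseqv.trans ((stR R).iseqv.symm h1) h2)
  obtain ⟨hc, hn, hh, hl, hlen⟩ := path_append c1 c2 n1 n2 hh1 hl1 hh2 hl2 hR hd
  have hlen1 : 1 ≤ l1.length := by
    cases l1 with
    | nil => simp at hh1
    | cons x t => simp
  have hlen2 : 1 ≤ l2.length := by
    cases l2 with
    | nil => simp at hh2
    | cons x t => simp
  refine ⟨l1 ++ l2, hc, hn, hh, hl, ?_, by omega, ?_, ?_⟩
  · intro x hx
    rcases List.mem_append.1 hx with hx1 | hx2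
    · exact Or.inl ((stR R).iseqv.trans (hs1 x hx1) ha)
    · exact Or.inr (hs2 x hx2)
  · intro hne
    have : 2 ≤ l1.length := two_le_length hh1 hl1 hne
    omega
  · intro hne
    have : 2 ≤ l2.length := two_le_length hh2 hl2 (fun h => hne h.symm)
    omega

lemma cross_card_bound (hSF : SFree R) : 4 * (crossS R).card ≤ (tQ R)^2 := by
  classical
  set mk : V → Quotient (stR R) := fun v => Quotient.mk (stR R) v with hmk
  set F : Finset (Quotient (stR R) × Quotient (stR R)) :=
    (crossS R).image (fun p => (mk p.1, mk p.2)) with hF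
  -- injectivity
  have hinj : Set.InjOn (fun p : V × V => (mk p.1, mk p.2)) (crossS R) := by
    rintro ⟨a, b⟩ hab ⟨c, d⟩ hcd heq
    simp only [Prod.mk.injEq, hmk] at heq
    have hac : Sm R a c := quot_mk_eq_iff.1 heq.1
    have hbd : Sm R b d := quot_mk_eq_iff.1 heq.2
    rw [Finset.mem_coe, mem_crossS] at hab hcd
    by_contra hne
    obtain ⟨l, hc, hn, hh, hl, _, _, h3a, h3b⟩ :=
      link_path (a' := a) (b' := b) hcd.1 hcd.2 hac ((stR R).iseqv.symm hbd)
    have h3 : 3 ≤ l.length := by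
      by_cases hac' : a = c
      · refine h3b (fun hbd' => hne ?_)
        rw [hac', hbd']
      · exact h3a hac'
    exact hSF l hc hn h3 a b hh hl hab.1
  have hcard : (crossS R).card = F.card := (Finset.card_image_of_injOn hinj).symm
  -- the three structural properties
  have hasym : ∀ p ∈ F, (p.2, p.1) ∉ F := by
    rintro ⟨A, B⟩ hAB hBA
    simp only [hF, Finset.mem_image, Prod.mk.injEq] at hAB hBA
    obtain ⟨⟨a1, b1⟩, hab1, ha1, hb1⟩ := hAB
    obtain ⟨⟨b2, a2⟩, hab2, hb2, ha2⟩ := hBA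
    rw [mem_crossS] at hab1 hab2
    have hbb : Sm R b1 b2 := quot_mk_eq_iff.1 (hb1.trans hb2.symm)
    have haa : Sm R a2 a1 := quot_mk_eq_iff.1 (ha2.trans ha1.symm)
    exact hab1.2 ⟨Relation.ReflTransGen.single hab1.1,
      (hbb.1.trans ((Relation.ReflTransGen.single hab2.1).trans haa.1))⟩
  have htri : ∀ A B C, (A,B) ∈ F → (B,C) ∈ F → (A,C) ∉ F := by
    rintro A B C hAB hBC hAC
    simp only [hF, Finset.mem_image, Prod.mk.injEq] at hAB hBC hAC
    obtain ⟨⟨a1, b1⟩, hab1, ha1, hb1⟩ := hAB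
    obtain ⟨⟨b2, c1⟩, hbc1, hb2, hc1⟩ := hBC
    obtain ⟨⟨a2, c2⟩, hac1, ha2, hc2⟩ := hAC
    rw [mem_crossS] at hab1 hbc1 hac1
    have haa : Sm R a2 a1 := quot_mk_eq_iff.1 (ha2.trans ha1.symm)
    have hbb : Sm R b1 b2 := quot_mk_eq_iff.1 (hb1.trans hb2.symm)
    have hcc : Sm R c1 c2 := quot_mk_eq_iff.1 (hc1.trans hc2.symm)
    obtain ⟨l1, c1', n1', hh1, hl1, hs1, hlen2, _, _⟩ :=
      link_path (a' := a2) (b' := b2) hab1.1 hab1.2 haa hbb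
    obtain ⟨l2, c2', n2', hh2, hl2, hs2⟩ := cls_path hcc
    have hd : ∀ x ∈ l1, x ∉ l2 := by
      intro x hx1 hx2
      have hxc : Sm R x c1 := hs2 x hx2
      rcases hs1 x hx1 with hxa | hxb
      · have h1 : Sm R a2 c1 := (stR R).iseqv.trans ((stR R).iseqv.trans haa
          ((stR R).iseqv.symm hxa)) hxc
        exact hac1.2 ((stR R).iseqv.trans h1 hcc)
      · exact hbc1.2 ((stR R).iseqv.trans ((stR R).iseqv.trans
          ((stR R).iseqv.symm hbb) ((stR R).iseqv.symm hxb)) hxc)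
    obtain ⟨hcL, hnL, hhL, hlL, hlenL⟩ := path_append c1' c2' n1' n2' hh1 hl1 hh2 hl2 hbc1.1 hd
    have hlen2' : 1 ≤ l2.length := by
      cases l2 with
      | nil => simp at hh2
      | cons x t => simp
    exact hSF _ hcL hnL (by omega) a2 c2 hhL hlL hac1.1
  have hcyc : ∀ A B C, (A,B) ∈ F → (B,C) ∈ F → (C,A) ∉ F := by
    rintro A B C hAB hBC hCA
    simp only [hF, Finset.mem_image, Prod.mk.injEq] at hAB hBC hCA
    obtain ⟨⟨a1, b1⟩, hab1, ha1, hb1⟩ := hAB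
    obtain ⟨⟨b2, c1⟩, hbc1, hb2, hc1⟩ := hBC
    obtain ⟨⟨c2, a2⟩, hca1, hc2, ha2⟩ := hCA
    rw [mem_crossS] at hab1 hbc1 hca1
    have haa : Sm R a2 a1 := quot_mk_eq_iff.1 (ha2.trans ha1.symm)
    have hbb : Sm R b1 b2 := quot_mk_eq_iff.1 (hb1.trans hb2.symm)
    have hcc : Sm R c1 c2 := quot_mk_eq_iff.1 (hc1.trans hc2.symm)
    refine hab1.2 ⟨Relation.ReflTransGen.single hab1.1, ?_⟩
    exact hbb.1.trans ((Relation.ReflTransGen.single hbc1.1).trans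
      (hcc.1.trans ((Relation.ReflTransGen.single hca1.1).trans haa.1)))
  have := mantel_oriented F hasym htri hcyc
  rw [hcard]
  refine this.trans ?_
  have : tQ R = Fintype.card (Quotient (stR R)) := Fintype.card_congr (Equiv.refl _)
  rw [this]
end crossbound
section cycle
variable [DecidableEq V] {R : V → V → Prop} {C : List V} {a0 z0 : V}
variable (hch : C.Chain' R) (hnd : C.Nodup)
  (hh0 : C.head? = some a0) (hz0 : C.getLast? = some z0) (hcl : R z0 a0)

include hch hnd hh0 hz0 hcl in
/-- an arc of the cycle `C` from `p` to `q` -/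
lemma arc_exists (p q : V) (hp : p ∈ C) (hq : q ∈ C) :
    ∃ L : List V, L.Chain' R ∧ L.Nodup ∧ L.head? = some p ∧ L.getLast? = some q ∧
      (∀ x ∈ L, x ∈ C) ∧
      ((C.idxOf p ≤ C.idxOf q ∧ L.length = C.idxOf q - C.idxOf p + 1) ∨
        (C.idxOf q < C.idxOf p ∧
          L.length = C.length - C.idxOf p + (C.idxOf q + 1))) := by
  classical
  set i := C.idxOf p with hi
  set j := C.idxOf q with hj
  have hil : i < C.length := List.idxOf_lt_length_iff.2 hp
  have hjl : j < C.length := List.idxOf_lt_length_iff.2 hq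
  rcases le_or_gt i j with hij | hij
  · refine ⟨(C.drop i).take (j - i + 1), (hch.drop i).take _,
      hnd.sublist ((List.take_sublist _ _).trans (List.drop_sublist _ _)), ?_, ?_, ?_,
      Or.inl ⟨hij, by rw [List.length_take, List.length_drop]; omega⟩⟩
    · rw [List.head?_eq_getElem?, List.getElem?_take_of_lt (by omega), List.getElem?_drop]
      simpa using List.getElem?_idxOf hp
    · have hlen : ((C.drop i).take (j - i + 1)).length = j - i + 1 := by
        rw [List.length_take, List.length_drop]; omega
      rw [List.getLast?_eq_getElem?, hlen, Nat.add_sub_cancel,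
        List.getElem?_take_of_lt (by omega), List.getElem?_drop]
      have : i + (j - i) = j := by omega
      rw [this]
      simpa using List.getElem?_idxOf hq
    · intro x hx
      exact List.mem_of_mem_drop (List.mem_of_mem_take hx)
  · have hdne : C.drop i ≠ [] := by
      rw [← List.length_pos_iff_ne_nil, List.length_drop]; omega
    have htne : C.take (j + 1) ≠ [] := by
      rw [← List.length_pos_iff_ne_nil, List.length_take]
      have : 0 < C.length := by omega
      omega
    refine ⟨C.drop i ++ C.take (j + 1), ?_, ?_, ?_, ?_, ?_,
      Or.inr ⟨hij, by
        rw [List.length_append, List.length_take, List.length_drop]; omega⟩⟩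
    · refine List.isChain_append.2 ⟨hch.drop i, hch.take _, ?_⟩
      intro x hx y hy
      rw [getLast?_drop' hil, hz0] at hx
      rw [List.head?_eq_getElem?, List.getElem?_take_of_lt (by omega),
        ← List.head?_eq_getElem?, hh0] at hy
      simp only [Option.mem_def, Option.some_inj] at hx hy
      subst hx; subst hy; exact hcl
    · exact List.nodup_append'.2 ⟨hnd.sublist (List.drop_sublist _ _),
        hnd.sublist (List.take_sublist _ _),
        (List.disjoint_take_drop hnd (by omega)).symm⟩
    · rw [List.head?_append_of_ne_nil _ hdne, List.head?_drop]
      simpa using List.getElem?_idxOf hp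
    · rw [List.getLast?_append_of_ne_nil _ htne]
      have hlen : (C.take (j + 1)).length = j + 1 := by
        rw [List.length_take]; omega
      rw [List.getLast?_eq_getElem?, hlen, Nat.add_sub_cancel,
        List.getElem?_take_of_lt (by omega)]
      simpa using List.getElem?_idxOf hq
    · intro x hx
      rcases List.mem_append.1 hx with h | h
      · exact List.mem_of_mem_drop h
      · exact List.mem_of_mem_take h

include hch hnd hh0 hz0 hcl in
/-- mutual reachability along the cycle -/
lemma cycle_rtg (p q : V) (hp : p ∈ C) (hq : q ∈ C) : Relation.ReflTransGen R p q := by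
  obtain ⟨L, hc, _, hh, hl, _, _⟩ := arc_exists hch hnd hh0 hz0 hcl p q hp hq
  exact chain_to_rtg L p q hc hh hl

include hch hnd hh0 hz0 hcl in
lemma chord_succ (hirr : ∀ x : V, ¬ R x x) (hSF : SFree R) {p q q' : V}
    (hp : p ∈ C) (hq : q ∈ C) (hq' : q' ∈ C) (e1 : R p q) (e2 : R p q') : q = q' := by
  classical
  have key : ∀ r, r ∈ C → R p r →
      C.idxOf r = (if C.idxOf p + 1 < C.length then C.idxOf p + 1 else 0) := by
    intro r hr hpr
    have hpr_ne : p ≠ r := fun h => hirr p (h ▸ hpr)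
    obtain ⟨L, hc, hn, hhL, hlL, _, hlen⟩ := arc_exists hch hnd hh0 hz0 hcl p r hp hr
    have hge2 : 2 ≤ L.length := two_le_length hhL hlL hpr_ne
    have hlt3 : ¬ 3 ≤ L.length := fun h3 => hSF L hc hn h3 p r hhL hlL hpr
    have hil : C.idxOf p < C.length := List.idxOf_lt_length_iff.2 hp
    have hjl : C.idxOf r < C.length := List.idxOf_lt_length_iff.2 hr
    have hij_ne : C.idxOf p ≠ C.idxOf r :=
      fun h => hpr_ne ((List.idxOf_inj hp).1 h)
    rcases hlen with ⟨hij, hf⟩ | ⟨hij, hf⟩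
    · rw [if_pos (by omega)]; omega
    · rw [if_neg (by omega)]; omega
  have := (key q hq e1).trans (key q' hq' e2).symm
  exact (List.idxOf_inj hq).1 this

include hch hnd hh0 hz0 hcl in
lemma toC_unique (hSF : SFree R) {w p p' : V} (hw : w ∉ C)
    (hp : p ∈ C) (hp' : p' ∈ C) (e1 : R p w) (e2 : R p' w) : p = p' := by
  by_contra hne
  obtain ⟨L, hc, hn, hhL, hlL, hsL, _⟩ := arc_exists hch hnd hh0 hz0 hcl p p' hp hp'
  obtain ⟨hc2, hn2, hh2, hl2, hlen2⟩ := path_append (l2 := [w]) (u2 := w) (v2 := w)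
    hc (by simp [List.Chain']) hn (by simp)
    hhL hlL rfl rfl e2 (fun x hx => by
      simp only [List.mem_singleton]
      rintro rfl
      exact hw (hsL x hx))
  have hge : 2 ≤ L.length := two_le_length hhL hlL hne
  exact hSF _ hc2 hn2 (by rw [hlen2]; simp; omega) p w hh2 hl2 e1

include hch hnd hh0 hz0 hcl in
lemma fromC_unique (hSF : SFree R) {w p p' : V} (hw : w ∉ C)
    (hp : p ∈ C) (hp' : p' ∈ C) (e1 : R w p) (e2 : R w p') : p = p' := by
  by_contra hne
  obtain ⟨L, hc, hn, hhL, hlL, hsL, _⟩ := arc_exists hch hnd hh0 hz0 hcl p p' hp hp'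
  obtain ⟨hc2, hn2, hh2, hl2, hlen2⟩ := path_append (l1 := [w]) (u1 := w) (v1 := w)
    (by simp [List.Chain']) hc (by simp) hn
    rfl rfl hhL hlL e1 (fun x hx => by
      simp only [List.mem_singleton] at hx
      intro hmem
      exact hw (hx ▸ hsL x hmem))
  have hge : 2 ≤ L.length := two_le_length hhL hlL hne
  exact hSF _ hc2 hn2 (by rw [hlen2]; simp; omega) w p' hh2 hl2 e2

end cycle
section contraction
variable [DecidableEq V]

def proj (C : List V) (b : V) (x : V) : V := if x ∈ C then b else x

variable {C : List V} {b z0 : V}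

lemma proj_of_mem {x : V} (h : x ∈ C) : proj C b x = b := if_pos h

lemma proj_of_not_mem {x : V} (h : x ∉ C) : proj C b x = x := if_neg h

lemma proj_prop (hbC : b ∈ C) (x : V) : proj C b x ∈ C → proj C b x = b := by
  unfold proj
  split
  · intro _; rfl
  · intro h
    next hn => exact absurd h hn

abbrev conV (C : List V) (b : V) : Type := {x : V // x ∈ C → x = b}

def liftV (hbC : b ∈ C) (x : V) : conV C b := ⟨proj C b x, proj_prop hbC x⟩

lemma mem_of_proj_eq_b (hbC : b ∈ C) {x : V} (h : proj C b x = b) : x ∈ C := by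
  by_cases hx : x ∈ C
  · exact hx
  · rw [proj_of_not_mem hx] at h
    exact h ▸ hbC

lemma proj_fiber (hbC : b ∈ C) {p q : V} (h : proj C b p = proj C b q) :
    p = q ∨ (p ∈ C ∧ q ∈ C) := by
  by_cases hp : p ∈ C <;> by_cases hq : q ∈ C
  · exact Or.inr ⟨hp, hq⟩
  · rw [proj_of_mem hp, proj_of_not_mem hq] at h
    exact absurd (h ▸ hbC) hq
  · rw [proj_of_not_mem hp, proj_of_mem hq] at h
    exact absurd (h.symm ▸ hbC) hp
  · rw [proj_of_not_mem hp, proj_of_not_mem hq] at h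
    exact Or.inl h

lemma proj_val (hbC : b ∈ C) (x : conV C b) : proj C b x.val = x.val := by
  by_cases h : x.val ∈ C
  · rw [proj_of_mem h]
    exact (x.prop h).symm
  · exact proj_of_not_mem h

lemma liftV_val (hbC : b ∈ C) (x : conV C b) : liftV hbC x.val = x :=
  Subtype.ext (proj_val hbC x)

def conR (R : V → V → Prop) (C : List V) (b : V) [DecidableEq V] :
    conV C b → conV C b → Prop :=
  fun x y => ∃ p q : V, R p q ∧ proj C b p = x.val ∧ proj C b q = y.val ∧ ¬(p ∈ C ∧ q ∈ C)

variable {R : V → V → Prop}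
variable (hch : C.Chain' R) (hnd : C.Nodup)
  (hh0 : C.head? = some b) (hz0 : C.getLast? = some z0) (hcl : R z0 b)

lemma hbC_of (hh0 : C.head? = some b) : b ∈ C :=
  List.mem_of_mem_head? (by rw [hh0]; simp)

lemma con_irr (hirr : ∀ x : V, ¬ R x x) (hbC : b ∈ C) (x : conV C b) :
    ¬ conR R C b x x := by
  rintro ⟨p, q, hpq, hp, hq, hnb⟩
  rcases proj_fiber hbC (hp.trans hq.symm) with rfl | hboth
  · exact hirr p hpq
  · exact hnb hboth

include hch hnd hh0 hz0 hcl in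
lemma con_rt1 (hbC : b ∈ C) {u v : V} (h : Relation.ReflTransGen R u v) :
    Relation.ReflTransGen (conR R C b) (liftV hbC u) (liftV hbC v) := by
  induction h with
  | refl => exact .refl
  | @tail c d huc hcd ih =>
      by_cases hcc : c ∈ C ∧ d ∈ C
      · have : liftV hbC c = liftV hbC d := Subtype.ext (by
          simp only [liftV, proj_of_mem hcc.1, proj_of_mem hcc.2])
        rw [← this]
        exact ih
      · exact ih.tail ⟨c, d, hcd, rfl, rfl, hcc⟩

include hch hnd hh0 hz0 hcl in
lemma con_rt2 (hbC : b ∈ C) {x y : conV C b}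
    (h : Relation.ReflTransGen (conR R C b) x y) :
    Relation.ReflTransGen R x.val y.val := by
  induction h with
  | refl => exact .refl
  | @tail c d hxc hcd ih =>
      obtain ⟨p, q, hpq, hp, hq, hnb⟩ := hcd
      have h1 : Relation.ReflTransGen R c.val p := by
        by_cases hpc : p ∈ C
        · rw [proj_of_mem hpc] at hp
          rw [← hp]
          exact cycle_rtg hch hnd hh0 hz0 hcl b p hbC hpc
        · rw [proj_of_not_mem hpc] at hp
          rw [← hp]
      have h2 : Relation.ReflTransGen R q d.val := by
        by_cases hqc : q ∈ C
        · rw [proj_of_mem hqc] at hq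
          rw [← hq]
          exact cycle_rtg hch hnd hh0 hz0 hcl q b hqc hbC
        · rw [proj_of_not_mem hqc] at hq
          rw [hq]
      exact ih.trans (h1.trans ((Relation.ReflTransGen.single hpq).trans h2))

include hch hnd hh0 hz0 hcl in
lemma lift_path (hbC : b ∈ C) :
    ∀ (L' : List (conV C b)), L'.Chain' (conR R C b) → L'.Nodup →
    ∀ (x y : conV C b), L'.head? = some x → L'.getLast? = some y →
    ∀ ps qs : V, proj C b ps = x.val → proj C b qs = y.val →
    ∃ L : List V, L.Chain' R ∧ L.Nodup ∧ L.head? = some ps ∧ L.getLast? = some qs ∧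
      L'.length ≤ L.length ∧ (∀ v ∈ L, ∃ x' ∈ L', proj C b v = x'.val)
  | [] => by intros; simp_all
  | [x0] => by
      intro hc hn x y hh hl ps qs hps hqs
      simp only [List.head?_cons, Option.some_inj] at hh
      simp only [List.getLast?_singleton, Option.some_inj] at hl
      subst hh; subst hl
      by_cases hxb : (x0 : V) = b
      · have hpsC : ps ∈ C := mem_of_proj_eq_b hbC (hps.trans hxb)
        have hqsC : qs ∈ C := mem_of_proj_eq_b hbC (hqs.trans hxb)
        obtain ⟨L, lc, ln, lh, ll, ls, _⟩ :=
          arc_exists hch hnd hh0 hz0 hcl ps qs hpsC hqsC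
        refine ⟨L, lc, ln, lh, ll, ?_, ?_⟩
        · have hne : L ≠ [] := by rintro rfl; simp at lh
          have := List.length_pos_of_ne_nil hne
          simp; omega
        · intro v hv
          exact ⟨x0, by simp, by rw [proj_of_mem (ls v hv), hxb]⟩
      · have hpsn : ps ∉ C := by
          intro hmem
          rw [proj_of_mem hmem] at hps
          exact hxb hps.symm
        have hqsn : qs ∉ C := by
          intro hmem
          rw [proj_of_mem hmem] at hqs
          exact hxb hqs.symm
        rw [proj_of_not_mem hpsn] at hps
        rw [proj_of_not_mem hqsn] at hqs
        have hpq : ps = qs := hps.trans hqs.symm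
        refine ⟨[ps], by simp [List.Chain'], by simp, by simp, by simp [hpq], by simp, ?_⟩
        intro v hv
        simp only [List.mem_singleton] at hv
        exact ⟨x0, by simp, by rw [hv, proj_of_not_mem hpsn, hps]⟩
  | x0 :: z0' :: rest => by
      intro hc hn x y hh hl ps qs hps hqs
      simp only [List.head?_cons, Option.some_inj] at hh
      subst hh
      obtain ⟨p1, q1, hp1q1, hp1, hq1, hnb⟩ := (List.isChain_cons_cons.1 hc).1
      have hl' : (z0' :: rest).getLast? = some y := by
        rw [show x0 :: z0' :: rest = [x0] ++ (z0' :: rest) from rfl,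
          List.getLast?_append_of_ne_nil _ (by simp)] at hl
        exact hl
      obtain ⟨L1, c1, n1, lh1, ll1, hlen1, hsup1⟩ :=
        lift_path hbC (z0' :: rest) (List.isChain_cons_cons.1 hc).2
          (List.nodup_cons.1 hn).2 z0' y rfl hl' q1 qs hq1 hqs
      -- build seg₀ from ps to p1
      have hseg : ∃ S : List V, S.Chain' R ∧ S.Nodup ∧ S.head? = some ps ∧
          S.getLast? = some p1 ∧ 1 ≤ S.length ∧ ∀ v ∈ S, proj C b v = (x0 : V) := by
        by_cases hxb : (x0 : V) = b
        · have hpsC : ps ∈ C := mem_of_proj_eq_b hbC (hps.trans hxb)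
          have hp1C : p1 ∈ C := mem_of_proj_eq_b hbC (hp1.trans hxb)
          obtain ⟨S, sc, sn, sh, sl, ss, _⟩ :=
            arc_exists hch hnd hh0 hz0 hcl ps p1 hpsC hp1C
          refine ⟨S, sc, sn, sh, sl, ?_, fun v hv => by rw [proj_of_mem (ss v hv), hxb]⟩
          have hne : S ≠ [] := by rintro rfl; simp at sh
          have := List.length_pos_of_ne_nil hne
          omega
        · have hpsn : ps ∉ C := by
            intro hmem
            rw [proj_of_mem hmem] at hps
            exact hxb hps.symm
          have hp1n : p1 ∉ C := by
            intro hmem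
            rw [proj_of_mem hmem] at hp1
            exact hxb hp1.symm
          rw [proj_of_not_mem hpsn] at hps
          rw [proj_of_not_mem hp1n] at hp1
          have hpp : ps = p1 := hps.trans hp1.symm
          refine ⟨[ps], by simp [List.Chain'], by simp, by simp, by simp [hpp], by simp, ?_⟩
          intro v hv
          simp only [List.mem_singleton] at hv
          rw [hv, proj_of_not_mem hpsn, hps]
      obtain ⟨S, sc, sn, sh, sl, hlenS, hsupS⟩ := hseg
      have hdisj : ∀ v ∈ S, v ∉ L1 := by
        intro v hvS hvL
        obtain ⟨x', hx', hx'v⟩ := hsup1 v hvL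
        have hvv : (x0 : V) = x'.val := (hsupS v hvS).symm.trans hx'v
        have hxx : x0 = x' := Subtype.ext hvv
        rw [hxx] at hn
        exact (List.nodup_cons.1 hn).1 hx'
      obtain ⟨gc, gn, gh, gl, glen⟩ := path_append sc c1 sn n1 sh sl lh1 ll1 hp1q1 hdisj
      refine ⟨S ++ L1, gc, gn, gh, gl, ?_, ?_⟩
      · simp only [List.length_cons] at hlen1 ⊢
        omega
      · intro v hv
        rcases List.mem_append.1 hv with h | h
        · exact ⟨x0, by simp, hsupS v h⟩
        · obtain ⟨x', hx', hvx⟩ := hsup1 v h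
          exact ⟨x', List.mem_cons_of_mem _ hx', hvx⟩

include hch hnd hh0 hz0 hcl in
lemma con_SFree (hSF : SFree R) (hbC : b ∈ C) : SFree (conR R C b) := by
  intro L' hc hn h3 x y hh hl hRxy
  obtain ⟨ps, qs, hpq, hps, hqs, _⟩ := hRxy
  obtain ⟨L, lc, ln, lh, ll, hlen, _⟩ :=
    lift_path hch hnd hh0 hz0 hcl hbC L' hc hn x y hh hl ps qs hps hqs
  exact hSF L lc ln (le_trans h3 hlen) ps qs lh ll hpq

end contraction
section contraction2
variable [DecidableEq V] [Fintype V] {R : V → V → Prop} {C : List V} {b z0 : V}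
variable (hch : C.Chain' R) (hnd : C.Nodup)
  (hh0 : C.head? = some b) (hz0 : C.getLast? = some z0) (hcl : R z0 b)

open Classical in
lemma tQ_def (R : V → V → Prop) :
    tQ R = Fintype.card (Quotient (stR R)) := Fintype.card_congr (Equiv.refl _)

include hnd in
lemma card_conV (hbC : b ∈ C) :
    Fintype.card (conV C b) = Fintype.card V - (C.length - 1) := by
  classical
  rw [Fintype.card_subtype]
  have hset : Finset.univ.filter (fun x : V => x ∈ C → x = b) =
      Finset.univ \ (C.toFinset.erase b) := by
    ext x
    simp only [Finset.mem_filter, Finset.mem_univ, true_and, Finset.mem_sdiff,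
      Finset.mem_erase, List.mem_toFinset]
    constructor
    · intro h hc
      exact hc.1 (h hc.2)
    · intro h hc
      by_contra hxb
      exact h ⟨hxb, hc⟩
  rw [hset, Finset.card_sdiff_of_subset (Finset.subset_univ _),
    Finset.card_erase_of_mem (by simpa using hbC), List.toFinset_card_of_nodup hnd,
    Finset.card_univ]

include hch hnd hh0 hz0 hcl in
lemma con_tQ (hbC : b ∈ C) : tQ (conR R C b) = tQ R := by
  classical
  rw [tQ_def, tQ_def]
  have wd : ∀ x y : conV C b, Sm (conR R C b) x y →
      Quotient.mk (stR R) x.val = Quotient.mk (stR R) y.val := fun x y h =>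
    quot_mk_eq_iff.2 ⟨con_rt2 hch hnd hh0 hz0 hcl hbC h.1, con_rt2 hch hnd hh0 hz0 hcl hbC h.2⟩
  set g : Quotient (stR (conR R C b)) → Quotient (stR R) :=
    Quotient.lift (fun x : conV C b => Quotient.mk (stR R) x.val) wd with hg
  apply Fintype.card_of_bijective (f := g)
  constructor
  · intro a c
    induction a using Quotient.ind
    induction c using Quotient.ind
    next x y =>
      intro h
      have hxy : Sm R x.val y.val := quot_mk_eq_iff.1 h
      have h1 := con_rt1 hch hnd hh0 hz0 hcl hbC hxy.1
      have h2 := con_rt1 hch hnd hh0 hz0 hcl hbC hxy.2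
      rw [liftV_val hbC, liftV_val hbC] at h1 h2
      exact Quotient.sound ⟨h1, h2⟩
  · intro a
    induction a using Quotient.ind
    next v =>
      refine ⟨Quotient.mk _ (liftV hbC v), ?_⟩
      have : g (Quotient.mk _ (liftV hbC v)) = Quotient.mk (stR R) (proj C b v) := rfl
      rw [this]
      apply quot_mk_eq_iff.2
      by_cases hv : v ∈ C
      · rw [proj_of_mem hv]
        exact ⟨cycle_rtg hch hnd hh0 hz0 hcl b v hbC hv,
          cycle_rtg hch hnd hh0 hz0 hcl v b hv hbC⟩
      · rw [proj_of_not_mem hv]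
        exact ⟨.refl, .refl⟩

include hch hnd hh0 hz0 hcl in
lemma con_count (hirr : ∀ x : V, ¬ R x x) (hSF : SFree R) (hbC : b ∈ C) :
    (intS R).card ≤ C.length + (intS (conR R C b)).card := by
  classical
  have hsplit := Finset.card_filter_add_card_filter_not
    (s := intS R) (p := fun p : V × V => p.1 ∈ C ∧ p.2 ∈ C)
  have hA : ((intS R).filter (fun p : V × V => p.1 ∈ C ∧ p.2 ∈ C)).card ≤ C.length := by
    have := Finset.card_le_card_of_injOn (f := Prod.fst)
      (t := C.toFinset) (s := (intS R).filter (fun p : V × V => p.1 ∈ C ∧ p.2 ∈ C))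
      (fun a ha => by
        simp only [Finset.mem_coe, Finset.mem_filter] at ha
        simpa using ha.2.1)
      (by
        rintro ⟨a1, a2⟩ ha ⟨c1, c2⟩ hc hfst
        simp only [Finset.mem_coe, Finset.mem_filter, mem_intS] at ha hc
        obtain rfl : a1 = c1 := hfst
        have := chord_succ hch hnd hh0 hz0 hcl hirr hSF ha.2.1 ha.2.2 hc.2.2
          ha.1.1 hc.1.1
        rw [this])
    rwa [List.toFinset_card_of_nodup hnd] at this
  have hB : ((intS R).filter (fun p : V × V => ¬(p.1 ∈ C ∧ p.2 ∈ C))).card ≤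
      (intS (conR R C b)).card := by
    apply Finset.card_le_card_of_injOn
      (f := fun p : V × V => ((liftV hbC p.1, liftV hbC p.2) : conV C b × conV C b))
    · rintro ⟨a1, a2⟩ ha
      simp only [Finset.mem_coe, Finset.mem_filter, mem_intS] at ha
      rw [Finset.mem_coe, mem_intS]
      exact ⟨⟨a1, a2, ha.1.1, rfl, rfl, ha.2⟩,
        ⟨con_rt1 hch hnd hh0 hz0 hcl hbC ha.1.2.1, con_rt1 hch hnd hh0 hz0 hcl hbC ha.1.2.2⟩⟩
    · rintro ⟨a1, a2⟩ ha ⟨c1, c2⟩ hc heq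
      simp only [Finset.mem_coe, Finset.mem_filter, mem_intS] at ha hc
      simp only [Prod.mk.injEq] at heq
      have h1 : proj C b a1 = proj C b c1 := congrArg Subtype.val heq.1
      have h2 : proj C b a2 = proj C b c2 := congrArg Subtype.val heq.2
      rcases proj_fiber hbC h1 with rfl | hbo1
      · rcases proj_fiber hbC h2 with rfl | hbo2
        · rfl
        · -- a1 = c1, a2 ≠ c2 both in C, a1 ∉ C
          have ha1n : a1 ∉ C := fun h => ha.2 ⟨h, hbo2.1⟩
          have := fromC_unique hch hnd hh0 hz0 hcl hSF ha1n hbo2.1 hbo2.2 ha.1.1 hc.1.1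
          rw [this]
      · rcases proj_fiber hbC h2 with rfl | hbo2
        · have ha2n : a2 ∉ C := fun h => ha.2 ⟨hbo1.1, h⟩
          have := toC_unique hch hnd hh0 hz0 hcl hSF ha2n hbo1.1 hbo1.2 ha.1.1 hc.1.1
          rw [this]
        · exact absurd ⟨hbo1.1, hbo2.1⟩ ha.2
  omega
end contraction2
lemma internal_bound : ∀ (N : ℕ) (V : Type) (R : V → V → Prop) (inst : Fintype V),
    Fintype.card V ≤ N → (∀ x, ¬ R x x) → SFree R →
    (intS R).card + 2 * tQ R ≤ 2 * Fintype.card V := by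
  intro N
  induction N with
  | zero =>
      intro V R inst hcard hirr hSF
      classical
      have hemp : IsEmpty V := Fintype.card_eq_zero_iff.1 (Nat.le_zero.1 hcard)
      have h1 : (intS R) = ∅ := by
        apply Finset.eq_empty_of_forall_notMem
        rintro ⟨p, q⟩ _
        exact hemp.elim p
      have h2 : tQ R = 0 := by
        rw [tQ_def]
        have : IsEmpty (Quotient (stR R)) :=
          ⟨fun q => Quotient.inductionOn q (fun v => hemp.elim v)⟩
        exact Fintype.card_eq_zero
      rw [h1, h2]
      simp
  | succ N ih =>
      intro V R inst hcard hirr hSF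
      classical
      by_cases hint : (intS R).card = 0
      · rw [hint, zero_add]
        have htle : tQ R ≤ Fintype.card V := by
          rw [tQ_def]
          exact Fintype.card_quotient_le _
        omega
      · obtain ⟨⟨p, q⟩, he⟩ := Finset.card_pos.1 (Nat.pos_of_ne_zero hint)
        rw [mem_intS] at he
        obtain ⟨hR, hSm⟩ := he
        simp only at hR hSm
        have hpq : p ≠ q := fun h => hirr p (h ▸ hR)
        obtain ⟨C, lc, lnd, lh, ll, _⟩ := cls_path (R := R) ⟨hSm.2, hSm.1⟩
        -- C : simple path q ⇝ p ; closing edge R p q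
        have hbC : q ∈ C := hbC_of lh
        have hlen2 : 2 ≤ C.length := two_le_length lh ll (Ne.symm hpq)
        have hlenV : C.length ≤ Fintype.card V := lnd.length_le_card
        have hcardV' : Fintype.card (conV C q) = Fintype.card V - (C.length - 1) :=
          card_conV lnd hbC
        have hcard' : Fintype.card (conV C q) ≤ N := by omega
        have hih := ih (conV C q) (conR R C q) _ hcard'
          (con_irr hirr hbC) (con_SFree lc lnd lh ll hR hSF hbC)
        have hcount := con_count lc lnd lh ll hR hirr hSF hbC
        have htq := con_tQ lc lnd lh ll hR hbC
        rw [htq] at hih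
        omega
lemma arith_combine (n t i c : ℕ) (h1 : i + 2*t ≤ 2*n) (h2 : 4*c ≤ t*t)
    (ht1 : 1 ≤ t) (htn : t ≤ n) : i + c ≤ n*n/4 + 2 := by
  by_cases hn : n ≤ 8
  · interval_cases n <;> interval_cases t <;> omega
  · have h9 : 9 ≤ n := by omega
    have key : 4*(i+c) + 3 ≤ n*n + 8 := by
      zify at h1 h2 htn ht1 h9 ⊢
      nlinarith [mul_nonneg (sub_nonneg.2 htn) (by linarith : (0:ℤ) ≤ (n:ℤ) + t - 8)]
    omega

/-- The digraph with edge set `E` on vertex set `Fin n` contains the transitive cycle `TC_k`: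
there is an injective map `φ` of `{0, …, k-1}` into the vertices with all edges
`φ i → φ (i+1)` for `i ∈ {0, …, k-2}` together with the edge `φ 0 → φ (k-1)`. -/
def ContainsTC (n k : ℕ) (E : Finset (Fin n × Fin n)) : Prop :=
  ∃ φ : ℕ → Fin n, Set.InjOn φ (Set.Iio k) ∧
    (∀ i, i + 1 < k → (φ i, φ (i + 1)) ∈ E) ∧ (φ 0, φ (k - 1)) ∈ E

/-- A digraph on `n` vertices containing no transitive cycle `TC_k` for any `k ≥ 3`
has at most `⌊n²/4⌋ + 2` edges. -/
theorem tc_free_edge_bound (n : ℕ) (E : Finset (Fin n × Fin n))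
    (hirr : ∀ e ∈ E, e.1 ≠ e.2)
    (hfree : ∀ k, 3 ≤ k → ¬ ContainsTC n k E) :
    E.card ≤ n ^ 2 / 4 + 2 := by
  classical
  rcases Nat.eq_zero_or_pos n with rfl | hn
  · have hE : E = ∅ := Finset.eq_empty_of_forall_notMem (fun p _ => p.1.elim0)
    simp [hE]
  set R : Fin n → Fin n → Prop := fun u v => (u, v) ∈ E with hRdef
  have hSF : SFree R := by
    intro l hc hnd h3 u v hh hl hR
    apply hfree l.length h3
    have hlpos : 0 < l.length := by omega
    refine ⟨fun i => l.getD i u, ?_, ?_, ?_⟩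
    · intro i hi j hj hij
      simp only [Set.mem_Iio] at hi hj
      simp only [List.getD_eq_getElem _ _ hi, List.getD_eq_getElem _ _ hj] at hij
      have hinj := List.nodup_iff_injective_getElem.1 hnd
        (a₁ := ⟨i, hi⟩) (a₂ := ⟨j, hj⟩) (by simpa using hij)
      simpa using hinj
    · intro i hi
      show (l.getD i u, l.getD (i+1) u) ∈ E
      have h1 : l.getD i u = l.get ⟨i, by omega⟩ := by
        rw [List.getD_eq_getElem _ _ (by omega)]; rfl
      have h2 : l.getD (i+1) u = l.get ⟨i+1, by omega⟩ := by
        rw [List.getD_eq_getElem _ _ (by omega)]; rfl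
      rw [h1, h2]
      exact List.isChain_iff_getElem.1 hc i (by omega)
    · show (l.getD 0 u, l.getD (l.length - 1) u) ∈ E
      have h0 : l.getD 0 u = u := by
        rw [List.getD_eq_getElem _ _ hlpos]
        have := List.head?_eq_getElem? (l := l)
        rw [hh] at this
        simp only [List.getElem?_eq_getElem hlpos] at this
        exact (Option.some_inj.1 this).symm
      have hlast : l.getD (l.length - 1) u = v := by
        rw [List.getD_eq_getElem _ _ (by omega)]
        have := List.getLast?_eq_getElem? (l := l)
        rw [hl] at this
        simp only [List.getElem?_eq_getElem (show l.length - 1 < l.length by omega)] at this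
        exact (Option.some_inj.1 this).symm
      rw [h0, hlast]
      exact hR
  have hirr' : ∀ x : Fin n, ¬ R x x := fun x h => hirr (x, x) h rfl
  have hE : E.card = (intS R).card + (crossS R).card := by
    have h1 : E = Finset.univ.filter (fun p : Fin n × Fin n => R p.1 p.2) := by
      ext p
      simp [hRdef]
    have h2 := Finset.card_filter_add_card_filter_not
      (s := Finset.univ.filter (fun p : Fin n × Fin n => R p.1 p.2))
      (p := fun p : Fin n × Fin n => Sm R p.1 p.2)
    have h3 : (Finset.univ.filter (fun p : Fin n × Fin n => R p.1 p.2)).filter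
        (fun p => Sm R p.1 p.2) = intS R := by
      ext p
      simp [intS, and_assoc]
    have h4 : (Finset.univ.filter (fun p : Fin n × Fin n => R p.1 p.2)).filter
        (fun p => ¬ Sm R p.1 p.2) = crossS R := by
      ext p
      simp [crossS, and_assoc]
    rw [h3, h4] at h2
    rw [h1, ← h2]
  have hib := internal_bound (Fintype.card (Fin n)) (Fin n) R _ le_rfl hirr' hSF
  have hcb := cross_card_bound hSF
  have ht1 : 1 ≤ tQ R := by
    rw [tQ_def]
    have : Nonempty (Quotient (stR R)) := ⟨Quotient.mk _ ⟨0, hn⟩⟩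
    exact Fintype.card_pos
  have htn : tQ R ≤ Fintype.card (Fin n) := by
    rw [tQ_def]
    exact Fintype.card_quotient_le _
  rw [Fintype.card_fin] at hib htn
  have harith := arith_combine n (tQ R) (intS R).card (crossS R).card
    (by omega) (by rw [← pow_two]; omega) ht1 htn
  have hpow : n^2 = n*n := by ring
  omega
end

section
/- Let F be a family of subsets of [n] = {1,...,n}. If for every i ∈ [n] there exist sets A, B ∈ F with A \ B = {i}, then |F| ≥ 2√(n-2). -/
namespace FSLB

def chainN {V : Type*} (s : V → V → Prop) : ℕ → V → V → Prop
  | 0 => fun u v => u = v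
  | (k+1) => fun u v => ∃ w, chainN s k u w ∧ s w v

lemma rtg_iff_chainN {V : Type*} {s : V → V → Prop} {u v : V} :
    Relation.ReflTransGen s u v ↔ ∃ k, chainN s k u v := by
  constructor
  · intro h
    induction h with
    | refl => exact ⟨0, rfl⟩
    | tail _ hstep ih =>
      obtain ⟨k, hk⟩ := ih
      exact ⟨k + 1, _, hk, hstep⟩
  · rintro ⟨k, hk⟩
    induction k generalizing v with
    | zero => exact hk ▸ Relation.ReflTransGen.refl
    | succ k ih =>
      obtain ⟨w, hw, hstep⟩ := hk
      exact (ih hw).tail hstep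

lemma arb {V : Type*} [DecidableEq V] (e : ℕ → V → V → Prop) (M : Finset ℕ) (r : V) (C : Finset V)
    (hC : ∀ v ∈ C, Relation.ReflTransGen (fun a b => ∃ j ∈ M, e j a b) r v)
    (hcl : ∀ v ∈ C, ∀ w, Relation.ReflTransGen (fun a b => ∃ j ∈ M, e j a b) r w →
      Relation.ReflTransGen (fun a b => ∃ j ∈ M, e j a b) w v → w ∈ C) :
    ∃ T : Finset ℕ, T ⊆ M ∧ T.card ≤ (C.erase r).card ∧
      ∀ v ∈ C, Relation.ReflTransGen (fun a b => ∃ j ∈ T, e j a b) r v := by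
  classical
  set s : V → V → Prop := fun a b => ∃ j ∈ M, e j a b with hs
  have hP : ∀ v ∈ C, ∃ k, chainN s k r v := fun v hv => rtg_iff_chainN.1 (hC v hv)
  have key : ∀ v : V, ∃ j : ℕ, v ∈ C → v ≠ r →
      j ∈ M ∧ ∃ w, e j w v ∧ w ∈ C ∧
        ∃ (hw : ∃ k, chainN s k r w) (hv : ∃ k, chainN s k r v), Nat.find hw < Nat.find hv := by
    intro v
    by_cases hv : v ∈ C ∧ v ≠ r
    · obtain ⟨hvC, hvr⟩ := hv
      have hPv : ∃ k, chainN s k r v := hP v hvC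
      have hd0 : Nat.find hPv ≠ 0 := by
        intro h0
        have hspec := Nat.find_spec hPv
        rw [h0] at hspec
        exact hvr hspec.symm
      obtain ⟨k, hk⟩ := Nat.exists_eq_succ_of_ne_zero hd0
      have hspec := Nat.find_spec hPv
      rw [hk] at hspec
      obtain ⟨w, hw, hstep⟩ := hspec
      obtain ⟨j, hjM, hj⟩ := hstep
      have hPw : ∃ k', chainN s k' r w := ⟨k, hw⟩
      refine ⟨j, fun _ _ => ⟨hjM, w, hj, ?_, hPw, hPv, ?_⟩⟩
      · exact hcl v hvC w (rtg_iff_chainN.2 ⟨k, hw⟩)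
          (Relation.ReflTransGen.single ⟨j, hjM, hj⟩)
      · have h1 : Nat.find hPw ≤ k := Nat.find_le hw
        omega
    · exact ⟨0, fun hC' hr' => absurd ⟨hC', hr'⟩ hv⟩
  choose ℓ hℓ using key
  refine ⟨(C.erase r).image ℓ, ?_, Finset.card_image_le, ?_⟩
  · intro j hj
    simp only [Finset.mem_image, Finset.mem_erase] at hj
    obtain ⟨v, ⟨hvr, hvC⟩, rfl⟩ := hj
    exact (hℓ v hvC hvr).1
  · intro v hv
    have hPv := hP v hv
    suffices H : ∀ N, ∀ v, v ∈ C → ∀ (hPv : ∃ k, chainN s k r v), Nat.find hPv ≤ N →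
        Relation.ReflTransGen (fun a b => ∃ j ∈ (C.erase r).image ℓ, e j a b) r v by
      exact H (Nat.find hPv) v hv hPv le_rfl
    intro N
    induction N with
    | zero =>
      intro v hvC hPv hle
      by_cases hvr : v = r
      · exact hvr ▸ Relation.ReflTransGen.refl
      · obtain ⟨hjM, w, hj, hwC, hPw', hPv', hlt⟩ := hℓ v hvC hvr
        rw [Subsingleton.elim hPv' hPv] at hlt
        omega
    | succ N ih =>
      intro v hvC hPv hle
      by_cases hvr : v = r
      · exact hvr ▸ Relation.ReflTransGen.refl
      · obtain ⟨hjM, w, hj, hwC, hPw', hPv', hlt⟩ := hℓ v hvC hvr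
        rw [Subsingleton.elim hPv' hPv] at hlt
        have hN : Nat.find hPw' ≤ N := by omega
        exact (ih w hwC hPw' hN).tail
          ⟨ℓ v, Finset.mem_image_of_mem ℓ (Finset.mem_erase.2 ⟨hvr, hvC⟩), hj⟩

end FSLB

namespace FSLB

def stp (AA BB : ℕ → Finset ℕ) (T : Finset ℕ) (u v : Finset ℕ) : Prop :=
  ∃ j ∈ T, AA j = u ∧ BB j = v

def rch (AA BB : ℕ → Finset ℕ) (T : Finset ℕ) : Finset ℕ → Finset ℕ → Prop :=
  Relation.ReflTransGen (stp AA BB T)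

def ecl (AA BB : ℕ → Finset ℕ) (L : Finset ℕ) (u v : Finset ℕ) : Prop :=
  rch AA BB L u v ∧ rch AA BB L v u

variable {AA BB : ℕ → Finset ℕ} {L T T' : Finset ℕ} {u v : Finset ℕ} {i j k : ℕ}

lemma rch_mono (hTT : T ⊆ T') (h : rch AA BB T u v) : rch AA BB T' u v :=
  Relation.ReflTransGen.mono (fun _ _ ⟨j, hj, hh⟩ => ⟨j, hTT hj, hh⟩ :
    ∀ a b, stp AA BB T a b → stp AA BB T' a b) _ _ h

lemma mem_AA (hg : ∀ j ∈ L, AA j \ BB j = {j}) (hi : i ∈ L) : i ∈ AA i := by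
  have h1 : i ∈ AA i \ BB i := (hg i hi) ▸ Finset.mem_singleton_self i
  exact (Finset.mem_sdiff.1 h1).1

lemma not_mem_BB (hg : ∀ j ∈ L, AA j \ BB j = {j}) (hi : i ∈ L) : i ∉ BB i := by
  have h1 : i ∈ AA i \ BB i := (hg i hi) ▸ Finset.mem_singleton_self i
  exact (Finset.mem_sdiff.1 h1).2

lemma cut (hg : ∀ j ∈ L, AA j \ BB j = {j}) (hu : i ∈ u)
    (h : rch AA BB (L.erase i) u v) : i ∈ v := by
  induction h with
  | refl => exact hu
  | tail _ hstep ih =>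
    obtain ⟨j, hj, rfl, rfl⟩ := hstep
    have hjL := Finset.mem_of_mem_erase hj
    have hji := Finset.ne_of_mem_erase hj
    by_contra hnot
    have h2 : i ∈ AA j \ BB j := Finset.mem_sdiff.2 ⟨ih, hnot⟩
    rw [hg j hjL] at h2
    exact hji (Finset.mem_singleton.1 h2).symm

lemma split (i : ℕ) (h : rch AA BB L u v) :
    rch AA BB (L.erase i) u v ∨
      (rch AA BB (L.erase i) u (AA i) ∧ rch AA BB (L.erase i) (BB i) v) := by
  induction h with
  | refl => exact Or.inl Relation.ReflTransGen.refl
  | tail _ hstep ih =>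
    obtain ⟨j, hjL, hA, hB⟩ := hstep
    by_cases hji : j = i
    · subst hji
      refine Or.inr ⟨?_, hB ▸ Relation.ReflTransGen.refl⟩
      rcases ih with h1 | ⟨h1, _⟩
      · exact hA ▸ h1
      · exact hA ▸ h1
    · have hstep' : stp AA BB (L.erase i) _ _ := ⟨j, Finset.mem_erase.2 ⟨hji, hjL⟩, hA, hB⟩
      rcases ih with h1 | ⟨h1, h2⟩
      · exact Or.inl (h1.tail hstep')
      · exact Or.inr ⟨h1, h2.tail hstep'⟩

lemma edge_rch (hi : i ∈ L) : rch AA BB L (AA i) (BB i) :=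
  Relation.ReflTransGen.single ⟨i, hi, rfl, rfl⟩

lemma noloop (hg : ∀ j ∈ L, AA j \ BB j = {j}) (hi : i ∈ L) :
    ¬ rch AA BB (L.erase i) (AA i) (BB i) :=
  fun h => not_mem_BB hg hi (cut hg (mem_AA hg hi) h)

lemma ecl_refl : ecl AA BB L u u := ⟨Relation.ReflTransGen.refl, Relation.ReflTransGen.refl⟩

lemma ecl_symm {w : Finset ℕ} (h : ecl AA BB L u w) : ecl AA BB L w u := ⟨h.2, h.1⟩

lemma ecl_trans {w x : Finset ℕ} (h1 : ecl AA BB L u w) (h2 : ecl AA BB L w x) :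
    ecl AA BB L u x := ⟨h1.1.trans h2.1, h2.2.trans h1.2⟩

lemma crossU (hg : ∀ j ∈ L, AA j \ BB j = {j}) (hi : i ∈ L) (hj : j ∈ L)
    (hcross : ¬ ecl AA BB L (AA i) (BB i))
    (hA : ecl AA BB L (AA i) (AA j)) (hB : ecl AA BB L (BB i) (BB j)) : i = j := by
  have h1 : i ∈ AA j := by
    rcases split i hA.1 with ha | ⟨_, hb⟩
    · exact cut hg (mem_AA hg hi) ha
    · exact absurd ⟨edge_rch hi, (rch_mono (Finset.erase_subset _ _) hb).trans hA.2⟩ hcross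
  have h2 : i ∉ BB j := by
    intro hin
    rcases split i hB.2 with ha | ⟨ha, _⟩
    · exact not_mem_BB hg hi (cut hg hin ha)
    · exact hcross ⟨edge_rch hi, hB.1.trans (rch_mono (Finset.erase_subset _ _) ha)⟩
  have h3 : i ∈ AA j \ BB j := Finset.mem_sdiff.2 ⟨h1, h2⟩
  rw [hg j hj] at h3
  exact Finset.mem_singleton.1 h3

lemma digon (hi : i ∈ L) (hj : j ∈ L) (hcross : ¬ ecl AA BB L (AA i) (BB i))
    (h1 : ecl AA BB L (AA i) (BB j)) (h2 : ecl AA BB L (BB i) (AA j)) : False :=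
  hcross ⟨edge_rch hi, h2.1.trans ((edge_rch hj).trans h1.2)⟩

lemma cyc3 (hx : i ∈ L) (hy : j ∈ L) (hz : k ∈ L)
    (hcross : ¬ ecl AA BB L (AA i) (BB i))
    (e1 : ecl AA BB L (BB i) (AA j)) (e2 : ecl AA BB L (BB j) (AA k))
    (e3 : ecl AA BB L (BB k) (AA i)) : False :=
  hcross ⟨edge_rch hx,
    e1.1.trans ((edge_rch hy).trans (e2.1.trans ((edge_rch hz).trans e3.1)))⟩

lemma TT (hg : ∀ j ∈ L, AA j \ BB j = {j}) (hi : i ∈ L) (hj : j ∈ L) (hk : k ∈ L)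
    (h1 : ecl AA BB L (AA i) (AA k)) (h2 : ecl AA BB L (BB i) (AA j))
    (h3 : ecl AA BB L (BB j) (BB k))
    (ci : ¬ ecl AA BB L (AA i) (BB i)) (cj : ¬ ecl AA BB L (AA j) (BB j))
    (ck : ¬ ecl AA BB L (AA k) (BB k)) : False := by
  have s1 : k ∈ AA i := by
    rcases split k h1.2 with ha | ⟨_, hb⟩
    · exact cut hg (mem_AA hg hk) ha
    · exact (ck ⟨edge_rch hk, (rch_mono (Finset.erase_subset _ _) hb).trans h1.1⟩).elim
  have s2 : k ∈ BB i := by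
    by_contra hnot
    have hki : k ∈ AA i \ BB i := Finset.mem_sdiff.2 ⟨s1, hnot⟩
    rw [hg i hi] at hki
    have hki' : k = i := Finset.mem_singleton.1 hki
    subst hki'
    exact cj ⟨edge_rch hj, h3.1.trans h2.1⟩
  have s3 : k ∈ AA j := by
    rcases split k h2.1 with ha | ⟨_, hb⟩
    · exact cut hg s2 ha
    · exact (cj ⟨edge_rch hj, h3.1.trans (rch_mono (Finset.erase_subset _ _) hb)⟩).elim
  have s4 : k ∉ BB j := by
    intro hin
    rcases split k h3.1 with ha | ⟨ha, _⟩
    · exact not_mem_BB hg hk (cut hg hin ha)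
    · exact ck ⟨edge_rch hk, h3.2.trans (rch_mono (Finset.erase_subset _ _) ha)⟩
  have s5 : k ∈ AA j \ BB j := Finset.mem_sdiff.2 ⟨s3, s4⟩
  rw [hg j hj] at s5
  have hkj : k = j := Finset.mem_singleton.1 s5
  subst hkj
  exact ci ⟨edge_rch hi, h2.1.trans h1.2⟩


lemma arith0 (m k li : ℝ) (hk1 : 1 ≤ k) (hintra : li + 2 * k ≤ 2 * m) :
    4 * li ≤ m ^ 2 + 8 := by nlinarith [sq_nonneg (m - 4)]

lemma arith1 (m k li lc : ℝ) (hk0 : 0 ≤ k) (hkm : k ≤ m) (hlc : 1 ≤ lc)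
    (hintra : li + 2 * k ≤ 2 * m) (hcross : 4 * lc ^ 2 ≤ k ^ 2 * lc) :
    4 * (li + lc) ≤ m ^ 2 + 8 := by
  have h4 : 4 * lc ≤ k ^ 2 := by nlinarith
  have hk2 : 2 ≤ k := by nlinarith
  rcases le_or_gt 8 (m + k) with hbig | hsmall
  · nlinarith [mul_nonneg (sub_nonneg.2 hkm) (by linarith : (0:ℝ) ≤ m + k - 8)]
  · have hk4 : k ≤ 4 := by linarith
    nlinarith [mul_nonneg (sub_nonneg.2 hkm) (by linarith : (0:ℝ) ≤ 8 - (m + k)),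
      mul_nonneg (by linarith : (0:ℝ) ≤ k - 2) (by linarith : (0:ℝ) ≤ 4 - k),
      sq_nonneg (2 * m - 8)]

end FSLB

set_option maxHeartbeats 2000000 in
open FSLB in
/-- If `F` is a family of subsets of `[n]` such that for every `i ∈ [n]` there are
`A, B ∈ F` with `A \ B = {i}`, then `|F| ≥ 2√(n-2)`. -/
theorem family_size_lower_bound (n : ℕ) (F : Finset (Finset ℕ))
    (hsub : ∀ A ∈ F, A ⊆ Finset.Icc 1 n)
    (h : ∀ i ∈ Finset.Icc 1 n, ∃ A ∈ F, ∃ B ∈ F, A \ B = {i}) :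
    (F.card : ℝ) ≥ 2 * Real.sqrt ((n : ℝ) - 2) := by
  classical
  by_cases htriv : (n : ℝ) - 2 ≤ 0
  · rw [Real.sqrt_eq_zero'.2 htriv, mul_zero]
    positivity
  push_neg at htriv
  have hn3 : 3 ≤ n := by
    by_contra hc
    push_neg at hc
    interval_cases n <;> norm_num at htriv
  set L : Finset ℕ := Finset.Icc 1 n with hLdef
  have hch : ∀ j : ℕ, ∃ p : Finset ℕ × Finset ℕ,
      j ∈ L → p.1 ∈ F ∧ p.2 ∈ F ∧ p.1 \ p.2 = {j} := by
    intro j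
    by_cases hj : j ∈ L
    · obtain ⟨a, ha, b, hb, hab⟩ := h j hj
      exact ⟨(a, b), fun _ => ⟨ha, hb, hab⟩⟩
    · exact ⟨(∅, ∅), fun hj' => absurd hj' hj⟩
  choose P hP using hch
  set AA : ℕ → Finset ℕ := fun j => (P j).1 with hAAdef
  set BB : ℕ → Finset ℕ := fun j => (P j).2 with hBBdef
  have hg : ∀ j ∈ L, AA j \ BB j = {j} := fun j hj => (hP j hj).2.2
  have hmA : ∀ j ∈ L, AA j ∈ F := fun j hj => (hP j hj).1
  have hmB : ∀ j ∈ L, BB j ∈ F := fun j hj => (hP j hj).2.1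
  set cls : Finset ℕ → Finset (Finset ℕ) :=
    fun u => F.filter (fun v => FSLB.ecl AA BB L u v) with hclsdef
  set K : Finset (Finset (Finset ℕ)) := F.image cls with hKdef
  have cls_self : ∀ u ∈ F, u ∈ cls u := fun u hu => Finset.mem_filter.2 ⟨hu, FSLB.ecl_refl⟩
  have cls_eq_of : ∀ u v : Finset ℕ, FSLB.ecl AA BB L u v → cls u = cls v := by
    intro u v huv
    apply Finset.filter_congr
    intro w _
    constructor
    · intro h'
      exact FSLB.ecl_trans (FSLB.ecl_symm huv) h'
    · intro h'
      exact FSLB.ecl_trans huv h'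
  have ecl_of_cls_eq : ∀ u v : Finset ℕ, v ∈ F → cls u = cls v → FSLB.ecl AA BB L u v := by
    intro u v hv he
    have h1 : v ∈ cls u := he ▸ cls_self v hv
    exact (Finset.mem_filter.1 h1).2
  set Li : Finset ℕ := L.filter (fun i => FSLB.ecl AA BB L (AA i) (BB i)) with hLidef
  set Lc : Finset ℕ := L.filter (fun i => ¬ FSLB.ecl AA BB L (AA i) (BB i)) with hLcdef
  have hLsplit : Li.card + Lc.card = n := by
    rw [hLidef, hLcdef, Finset.card_filter_add_card_filter_not, hLdef, Nat.card_Icc]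
    omega
  -- per-class fiber bound
  have hfib : ∀ c ∈ K, (Li.filter (fun i => cls (AA i) = c)).card + 2 ≤ 2 * c.card := by
    intro c hc
    obtain ⟨r, hrF, rfl⟩ := Finset.mem_image.1 hc
    have hFtail : ∀ u w : Finset ℕ, FSLB.rch AA BB L u w → w = u ∨ w ∈ F := by
      intro u w hw
      induction hw with
      | refl => exact Or.inl rfl
      | tail _ hstep _ =>
        obtain ⟨j, hj, _, rfl⟩ := hstep
        exact Or.inr (hmB j hj)
    have hFhead : ∀ u w : Finset ℕ, FSLB.rch AA BB L u w → u = w ∨ u ∈ F := by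
      intro u w hw
      induction hw using Relation.ReflTransGen.head_induction_on with
      | refl => exact Or.inl rfl
      | head hstep _ _ =>
        obtain ⟨j, hj, rfl, -⟩ := hstep
        exact Or.inr (hmA j hj)
    have hCout : ∀ v ∈ cls r,
        Relation.ReflTransGen (fun a b => ∃ j ∈ L, AA j = a ∧ BB j = b) r v :=
      fun v hv => (Finset.mem_filter.1 hv).2.1
    have hclout : ∀ v ∈ cls r, ∀ w,
        Relation.ReflTransGen (fun a b => ∃ j ∈ L, AA j = a ∧ BB j = b) r w →
        Relation.ReflTransGen (fun a b => ∃ j ∈ L, AA j = a ∧ BB j = b) w v → w ∈ cls r := by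
      intro v hv w hrw hwv
      have hv' := Finset.mem_filter.1 hv
      have hrw' : FSLB.rch AA BB L r w := hrw
      have hwv' : FSLB.rch AA BB L w v := hwv
      have hwF : w ∈ F := by
        rcases hFtail r w hrw' with h1 | h1
        · exact h1 ▸ hrF
        · exact h1
      exact Finset.mem_filter.2 ⟨hwF, hrw', hwv'.trans hv'.2.2⟩
    obtain ⟨To, hToL, hTocard, hToreach⟩ :=
      FSLB.arb (fun j a b => AA j = a ∧ BB j = b) L r (cls r) hCout hclout
    have hCin : ∀ v ∈ cls r,
        Relation.ReflTransGen (fun a b => ∃ j ∈ L, AA j = b ∧ BB j = a) r v := by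
      intro v hv
      have h1 : FSLB.rch AA BB L v r := (Finset.mem_filter.1 hv).2.2
      exact Relation.reflTransGen_swap.2 h1
    have hclin : ∀ v ∈ cls r, ∀ w,
        Relation.ReflTransGen (fun a b => ∃ j ∈ L, AA j = b ∧ BB j = a) r w →
        Relation.ReflTransGen (fun a b => ∃ j ∈ L, AA j = b ∧ BB j = a) w v → w ∈ cls r := by
      intro v hv w hrw hwv
      have hrw' : FSLB.rch AA BB L w r := Relation.reflTransGen_swap.1 hrw
      have hwv' : FSLB.rch AA BB L v w := Relation.reflTransGen_swap.1 hwv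
      have hwF : w ∈ F := by
        rcases hFhead w r hrw' with h1 | h1
        · exact h1 ▸ hrF
        · exact h1
      exact Finset.mem_filter.2 ⟨hwF, (Finset.mem_filter.1 hv).2.1.trans hwv', hrw'⟩
    obtain ⟨Ti, hTiL, hTicard, hTireach⟩ :=
      FSLB.arb (fun j a b => AA j = b ∧ BB j = a) L r (cls r) hCin hclin
    have hsubset : Li.filter (fun i => cls (AA i) = cls r) ⊆ To ∪ Ti := by
      intro i hi
      have hi' := Finset.mem_filter.1 hi
      obtain ⟨hiL, hie⟩ := Finset.mem_filter.1 hi'.1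
      have hicls := hi'.2
      by_contra hnot
      rw [Finset.mem_union] at hnot
      push_neg at hnot
      obtain ⟨hno, hni⟩ := hnot
      have heclrA : FSLB.ecl AA BB L r (AA i) :=
        FSLB.ecl_symm (ecl_of_cls_eq (AA i) r hrF hicls)
      have heclrB : FSLB.ecl AA BB L r (BB i) := FSLB.ecl_trans heclrA hie
      have hAmem : AA i ∈ cls r := Finset.mem_filter.2 ⟨hmA i hiL, heclrA⟩
      have hBmem : BB i ∈ cls r := Finset.mem_filter.2 ⟨hmB i hiL, heclrB⟩
      have hToe : To ⊆ L.erase i :=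
        fun j hj => Finset.mem_erase.2 ⟨fun hji => hno (hji ▸ hj), hToL hj⟩
      have hTie : Ti ⊆ L.erase i :=
        fun j hj => Finset.mem_erase.2 ⟨fun hji => hni (hji ▸ hj), hTiL hj⟩
      have h1 : FSLB.rch AA BB (L.erase i) r (BB i) :=
        FSLB.rch_mono hToe (hToreach (BB i) hBmem)
      have h2 : FSLB.rch AA BB (L.erase i) (AA i) r := by
        have h3 := hTireach (AA i) hAmem
        have h4 : FSLB.rch AA BB Ti (AA i) r := Relation.reflTransGen_swap.1 h3
        exact FSLB.rch_mono hTie h4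
      exact FSLB.noloop hg hiL (h2.trans h1)
    have hrc : r ∈ cls r := cls_self r hrF
    have hc1 : 1 ≤ (cls r).card := Finset.card_pos.2 ⟨r, hrc⟩
    have hce : ((cls r).erase r).card = (cls r).card - 1 := Finset.card_erase_of_mem hrc
    have hle1 := Finset.card_le_card hsubset
    have hle2 := Finset.card_union_le To Ti
    omega
  -- classes are disjoint
  have hdisjK : ∀ x ∈ K, ∀ y ∈ K, x ≠ y → Disjoint x y := by
    intro x hx y hy hxy
    obtain ⟨r1, hr1, rfl⟩ := Finset.mem_image.1 hx
    obtain ⟨r2, hr2, rfl⟩ := Finset.mem_image.1 hy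
    rw [Finset.disjoint_left]
    intro v hv1 hv2
    have e1 := (Finset.mem_filter.1 hv1).2
    have e2 := (Finset.mem_filter.1 hv2).2
    exact hxy (cls_eq_of r1 r2 (FSLB.ecl_trans e1 (FSLB.ecl_symm e2)))
  have hsumcard : ∑ c ∈ K, c.card ≤ F.card := by
    rw [← Finset.card_biUnion hdisjK]
    apply Finset.card_le_card
    intro v hv
    rw [Finset.mem_biUnion] at hv
    obtain ⟨c, hc, hvc⟩ := hv
    obtain ⟨r1, hr1, rfl⟩ := Finset.mem_image.1 hc
    exact Finset.mem_of_mem_filter v hvc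
  have hintra : Li.card + 2 * K.card ≤ 2 * F.card := by
    have hmaps : ∀ i ∈ Li, cls (AA i) ∈ K := by
      intro i hi
      exact Finset.mem_image_of_mem cls (hmA i (Finset.mem_of_mem_filter i hi))
    have h1 : Li.card = ∑ c ∈ K, (Li.filter fun i => cls (AA i) = c).card :=
      Finset.card_eq_sum_card_fiberwise hmaps
    have h2 : ∑ c ∈ K, ((Li.filter fun i => cls (AA i) = c).card + 2) ≤ ∑ c ∈ K, 2 * c.card :=
      Finset.sum_le_sum hfib
    rw [Finset.sum_add_distrib, Finset.sum_const, ← Finset.mul_sum, smul_eq_mul] at h2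
    have h3 : 2 * (∑ c ∈ K, c.card) ≤ 2 * F.card := by omega
    omega
  -- cross part
  have hABne : ∀ i ∈ Lc, cls (AA i) ≠ cls (BB i) := by
    intro i hi heq
    obtain ⟨hiL, hie⟩ := Finset.mem_filter.1 hi
    exact hie (ecl_of_cls_eq _ _ (hmB i hiL) heq)
  have huq : ∀ i ∈ Lc, ∀ j ∈ Lc,
      s(cls (AA i), cls (BB i)) = s(cls (AA j), cls (BB j)) → i = j := by
    intro i hi j hj hpair
    obtain ⟨hiL, hie⟩ := Finset.mem_filter.1 hi
    obtain ⟨hjL, hje⟩ := Finset.mem_filter.1 hj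
    rcases Sym2.eq_iff.1 hpair with ⟨h1, h2⟩ | ⟨h1, h2⟩
    · exact FSLB.crossU hg hiL hjL hie
        (ecl_of_cls_eq _ _ (hmA j hjL) h1) (ecl_of_cls_eq _ _ (hmB j hjL) h2)
    · exact (FSLB.digon hiL hjL hie
        (ecl_of_cls_eq _ _ (hmB j hjL) h1) (ecl_of_cls_eq _ _ (hmA j hjL) h2)).elim
  set Nbr : Finset (Finset ℕ) → Finset (Finset (Finset ℕ)) :=
    fun c => K.filter (fun d => ∃ i ∈ Lc, s(cls (AA i), cls (BB i)) = s(c, d)) with hNbrdef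
  set inc : Finset (Finset ℕ) → Finset ℕ :=
    fun c => Lc.filter (fun i => cls (AA i) = c ∨ cls (BB i) = c) with hincdef
  have hdegNbr : ∀ c, (inc c).card = (Nbr c).card := by
    intro c
    apply Finset.card_bij (fun i _ => if cls (AA i) = c then cls (BB i) else cls (AA i))
    · intro i hi
      obtain ⟨hiLc, hor⟩ := Finset.mem_filter.1 hi
      have hiL : i ∈ L := Finset.mem_of_mem_filter i hiLc
      by_cases hA : cls (AA i) = c
      · rw [if_pos hA]
        refine Finset.mem_filter.2 ⟨Finset.mem_image_of_mem cls (hmB i hiL), i, hiLc, ?_⟩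
        rw [hA]
      · rw [if_neg hA]
        have hB : cls (BB i) = c := hor.resolve_left hA
        refine Finset.mem_filter.2 ⟨Finset.mem_image_of_mem cls (hmA i hiL), i, hiLc, ?_⟩
        rw [← hB]
        exact Sym2.eq_swap
    · intro i hi i' hi' heq
      have key : ∀ a, a ∈ inc c →
          s(cls (AA a), cls (BB a)) = s(c, if cls (AA a) = c then cls (BB a) else cls (AA a)) := by
        intro a ha
        obtain ⟨haLc, hor⟩ := Finset.mem_filter.1 ha
        by_cases hA : cls (AA a) = c
        · rw [if_pos hA, hA]
        · rw [if_neg hA, ← (hor.resolve_left hA)]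
          exact Sym2.eq_swap
      apply huq i (Finset.mem_of_mem_filter i hi) i' (Finset.mem_of_mem_filter i' hi')
      rw [key i hi, key i' hi', heq]
    · intro d hd
      obtain ⟨hdK, hex⟩ := Finset.mem_filter.1 hd
      obtain ⟨i, hiLc, hpair⟩ := hex
      rcases Sym2.eq_iff.1 hpair with ⟨h1, h2⟩ | ⟨h1, h2⟩
      · refine ⟨i, Finset.mem_filter.2 ⟨hiLc, Or.inl h1⟩, ?_⟩
        rw [if_pos h1]
        exact h2
      · refine ⟨i, Finset.mem_filter.2 ⟨hiLc, Or.inr h2⟩, ?_⟩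
        by_cases hA : cls (AA i) = c
        · rw [if_pos hA, h2, ← h1, hA]
        · rw [if_neg hA]
          exact h1
  have hsum_inc : ∑ c ∈ K, (inc c).card = 2 * Lc.card := by
    have h1 : ∀ c ∈ K, (inc c).card = ∑ i ∈ Lc, (if cls (AA i) = c ∨ cls (BB i) = c then 1 else 0) := by
      intro c _
      exact Finset.card_filter _ _
    rw [Finset.sum_congr rfl h1, Finset.sum_comm]
    have h2 : ∀ i ∈ Lc, (∑ c ∈ K, if cls (AA i) = c ∨ cls (BB i) = c then 1 else 0) = 2 := by
      intro i hi
      have hiL : i ∈ L := Finset.mem_of_mem_filter i hi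
      rw [← Finset.card_filter]
      have h3 : K.filter (fun c => cls (AA i) = c ∨ cls (BB i) = c)
          = {cls (AA i), cls (BB i)} := by
        ext d
        simp only [Finset.mem_filter, Finset.mem_insert, Finset.mem_singleton]
        constructor
        · rintro ⟨-, hd | hd⟩
          · exact Or.inl hd.symm
          · exact Or.inr hd.symm
        · rintro (rfl | rfl)
          · exact ⟨Finset.mem_image_of_mem cls (hmA i hiL), Or.inl rfl⟩
          · exact ⟨Finset.mem_image_of_mem cls (hmB i hiL), Or.inr rfl⟩
      rw [h3]
      exact Finset.card_pair (hABne i hi)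
    rw [Finset.sum_congr rfl h2, Finset.sum_const, smul_eq_mul, mul_comm]
  have hTF : ∀ i ∈ Lc, Disjoint (Nbr (cls (AA i))) (Nbr (cls (BB i))) := by
    intro i hi
    obtain ⟨hiL, hie⟩ := Finset.mem_filter.1 hi
    rw [Finset.disjoint_left]
    rintro e he1 he2
    obtain ⟨heK, hex2⟩ := Finset.mem_filter.1 he1
    obtain ⟨i2, hi2, hp2⟩ := hex2
    obtain ⟨-, hex3⟩ := Finset.mem_filter.1 he2
    obtain ⟨i3, hi3, hp3⟩ := hex3
    obtain ⟨hi2L, hi2e⟩ := Finset.mem_filter.1 hi2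
    obtain ⟨hi3L, hi3e⟩ := Finset.mem_filter.1 hi3
    rcases Sym2.eq_iff.1 hp2 with ⟨g1, g2⟩ | ⟨g1, g2⟩ <;>
      rcases Sym2.eq_iff.1 hp3 with ⟨f1, f2⟩ | ⟨f1, f2⟩
    · exact FSLB.TT hg hiL hi3L hi2L
        (ecl_of_cls_eq _ _ (hmA i2 hi2L) g1.symm)
        (ecl_of_cls_eq _ _ (hmA i3 hi3L) f1.symm)
        (ecl_of_cls_eq _ _ (hmB i2 hi2L) (f2.trans g2.symm))
        hie hi3e hi2e
    · exact FSLB.TT hg hi2L hi3L hiL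
        (ecl_of_cls_eq _ _ (hmA i hiL) g1)
        (ecl_of_cls_eq _ _ (hmA i3 hi3L) (g2.trans f1.symm))
        (ecl_of_cls_eq _ _ (hmB i hiL) f2)
        hi2e hi3e hie
    · exact FSLB.cyc3 hiL hi3L hi2L hie
        (ecl_of_cls_eq _ _ (hmA i3 hi3L) f1.symm)
        (ecl_of_cls_eq _ _ (hmA i2 hi2L) (f2.trans g1.symm))
        (ecl_of_cls_eq _ _ (hmA i hiL) g2)
    · exact FSLB.TT hg hi2L hiL hi3L
        (ecl_of_cls_eq _ _ (hmA i3 hi3L) (g1.trans f1.symm))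
        (ecl_of_cls_eq _ _ (hmA i hiL) g2)
        (ecl_of_cls_eq _ _ (hmB i3 hi3L) f2.symm)
        hi2e hie hi3e
  have hnbr : ∀ i ∈ Lc, (Nbr (cls (AA i))).card + (Nbr (cls (BB i))).card ≤ K.card := by
    intro i hi
    rw [← Finset.card_union_of_disjoint (hTF i hi)]
    apply Finset.card_le_card
    intro e he
    rcases Finset.mem_union.1 he with h' | h' <;> exact Finset.mem_of_mem_filter e h'
  have hsumA : ∀ (f : ℕ → Finset ℕ), (∀ j ∈ L, f j ∈ F) →
      ∑ i ∈ Lc, (Nbr (cls (f i))).card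
        = ∑ c ∈ K, (Lc.filter fun i => cls (f i) = c).card * (Nbr c).card := by
    intro f hf
    have hfw := Finset.sum_fiberwise_of_maps_to (s := Lc) (t := K) (g := fun i => cls (f i))
      (fun i hi => Finset.mem_image_of_mem cls (hf i (Finset.mem_of_mem_filter i hi)))
      (fun i => (Nbr (cls (f i))).card)
    rw [← hfw]
    apply Finset.sum_congr rfl
    intro c _
    have h5 : ∀ i ∈ Lc.filter (fun i => cls (f i) = c),
        (Nbr (cls (f i))).card = (Nbr c).card := by
      intro i hi
      rw [(Finset.mem_filter.1 hi).2]
    rw [Finset.sum_congr rfl h5, Finset.sum_const, smul_eq_mul]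
  have hdouble : ∑ i ∈ Lc, ((Nbr (cls (AA i))).card + (Nbr (cls (BB i))).card)
      = ∑ c ∈ K, (inc c).card * (Nbr c).card := by
    rw [Finset.sum_add_distrib, hsumA AA hmA, hsumA BB hmB, ← Finset.sum_add_distrib]
    apply Finset.sum_congr rfl
    intro c _
    rw [← add_mul]
    congr 1
    have hdisj2 : Disjoint (Lc.filter fun i => cls (AA i) = c)
        (Lc.filter fun i => cls (BB i) = c) := by
      rw [Finset.disjoint_left]
      intro i h1 h2
      exact hABne i (Finset.mem_of_mem_filter i h1)
        (((Finset.mem_filter.1 h1).2).trans ((Finset.mem_filter.1 h2).2).symm)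
    rw [hincdef]
    simp only []
    rw [Finset.filter_or, Finset.card_union_of_disjoint hdisj2]
  have hsum_sq : ∑ c ∈ K, (Nbr c).card ^ 2 ≤ Lc.card * K.card := by
    have h1 : ∀ c ∈ K, (inc c).card * (Nbr c).card = (Nbr c).card ^ 2 := by
      intro c _
      rw [hdegNbr c, sq]
    calc ∑ c ∈ K, (Nbr c).card ^ 2 = ∑ c ∈ K, (inc c).card * (Nbr c).card :=
          (Finset.sum_congr rfl h1).symm
      _ = ∑ i ∈ Lc, ((Nbr (cls (AA i))).card + (Nbr (cls (BB i))).card) := hdouble.symm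
      _ ≤ ∑ _i ∈ Lc, K.card := Finset.sum_le_sum hnbr
      _ = Lc.card * K.card := by rw [Finset.sum_const, smul_eq_mul]
  have hcrossR : 4 * ((Lc.card : ℝ)) ^ 2 ≤ (K.card : ℝ) ^ 2 * Lc.card := by
    have hCS := sq_sum_le_card_mul_sum_sq (s := K) (f := fun c => ((Nbr c).card : ℝ))
    have hs1 : ∑ c ∈ K, ((Nbr c).card : ℝ) = 2 * Lc.card := by
      have h6 : ∑ c ∈ K, (Nbr c).card = 2 * Lc.card := by
        rw [← hsum_inc]
        exact Finset.sum_congr rfl (fun c _ => (hdegNbr c).symm)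
      exact_mod_cast congrArg (Nat.cast : ℕ → ℝ) h6
    have hs2 : ∑ c ∈ K, ((Nbr c).card : ℝ) ^ 2 ≤ (Lc.card : ℝ) * K.card := by
      exact_mod_cast hsum_sq
    rw [hs1] at hCS
    have hk0 : (0 : ℝ) ≤ K.card := Nat.cast_nonneg _
    nlinarith [mul_le_mul_of_nonneg_left hs2 hk0]
  have hk1 : 1 ≤ K.card := by
    have h1n : 1 ∈ L := by
      rw [hLdef]
      exact Finset.mem_Icc.2 ⟨le_refl 1, by omega⟩
    exact Finset.card_pos.2 ⟨cls (AA 1), Finset.mem_image_of_mem cls (hmA 1 h1n)⟩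
  have hkm : K.card ≤ F.card := by
    have h1 : K.card ≤ ∑ c ∈ K, c.card := by
      calc K.card = ∑ _c ∈ K, 1 := Finset.card_eq_sum_ones K
        _ ≤ ∑ c ∈ K, c.card := Finset.sum_le_sum (fun c hc => by
            obtain ⟨r, hr, rfl⟩ := Finset.mem_image.1 hc
            exact Finset.card_pos.2 ⟨r, cls_self r hr⟩)
    exact h1.trans hsumcard
  -- final arithmetic
  have hk1R : (1 : ℝ) ≤ K.card := by exact_mod_cast hk1
  have hk0R : (0 : ℝ) ≤ K.card := Nat.cast_nonneg _
  have hkmR : (K.card : ℝ) ≤ F.card := by exact_mod_cast hkm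
  have hnR : (n : ℝ) = Li.card + Lc.card := by exact_mod_cast hLsplit.symm
  have hintraR : (Li.card : ℝ) + 2 * K.card ≤ 2 * F.card := by exact_mod_cast hintra
  have hfinal : 4 * (n : ℝ) ≤ (F.card : ℝ) ^ 2 + 8 := by
    rcases Nat.eq_zero_or_pos Lc.card with h0 | hpos
    · have h0R : (Lc.card : ℝ) = 0 := by exact_mod_cast h0
      have hh := FSLB.arith0 (F.card : ℝ) K.card Li.card hk1R (by linarith)
      rw [hnR, h0R]
      linarith
    · have hposR : (1 : ℝ) ≤ Lc.card := by exact_mod_cast hpos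
      have hh := FSLB.arith1 (F.card : ℝ) K.card Li.card Lc.card hk0R hkmR hposR
        (by linarith) hcrossR
      rw [hnR]
      linarith
  have h1 : (n : ℝ) - 2 ≤ ((F.card : ℝ) / 2) ^ 2 := by
    have h2 : ((F.card : ℝ) / 2) ^ 2 = (F.card : ℝ) ^ 2 / 4 := by ring
    linarith
  have hsq : Real.sqrt ((n : ℝ) - 2) ≤ (F.card : ℝ) / 2 := by
    have h3 : (0 : ℝ) ≤ (F.card : ℝ) / 2 := by
      have := Nat.cast_nonneg (α := ℝ) F.card
      linarith
    calc Real.sqrt ((n : ℝ) - 2) ≤ Real.sqrt (((F.card : ℝ) / 2) ^ 2) := Real.sqrt_le_sqrt h1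
      _ = (F.card : ℝ) / 2 := Real.sqrt_sq h3
  linarith
end

section
/- For every n ∈ ℕ there exists a digraph D on n vertices with ⌊n²/4⌋ edges that contains no transitive cycle TC_k for any k ≥ 3. (Hence the bound ⌊n²/4⌋ + 2 for TC-free digraphs is tight up to an additive constant.) -/
lemma half_mul_half (n : ℕ) : n / 2 * (n - n / 2) = n ^ 2 / 4 := by
  rcases Nat.even_or_odd n with ⟨m, hm⟩ | ⟨m, hm⟩ <;> subst hm
  · rw [show (m + m) / 2 = m by omega, show m + m - m = m from by omega,
      show (m + m) ^ 2 = 4 * (m * m) by ring, Nat.mul_div_cancel_left _ (by norm_num)]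
  · rw [show (2 * m + 1) / 2 = m by omega, show 2 * m + 1 - m = m + 1 from by omega,
      show (2 * m + 1) ^ 2 = 4 * (m * (m + 1)) + 1 by ring]
    omega

/-- For every `n` there is a digraph on `n` vertices with `⌊n²/4⌋` edges containing
no transitive cycle `TC_k` for any `k ≥ 3`. -/
theorem tc_free_extremal_example (n : ℕ) :
    ∃ E : Finset (Fin n × Fin n), (∀ e ∈ E, e.1 ≠ e.2) ∧
      E.card = n ^ 2 / 4 ∧ ∀ k, 3 ≤ k → ¬ ContainsTC n k E := by
  refine ⟨(Finset.univ.filter fun a : Fin n => a.val < n / 2) ×ˢ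
      (Finset.univ.filter fun b : Fin n => n / 2 ≤ b.val), ?_, ?_, ?_⟩
  · rintro ⟨a, b⟩ h
    simp only [Finset.mem_product, Finset.mem_filter, Finset.mem_univ, true_and] at h
    intro hab
    simp only at hab
    subst hab
    omega
  · rcases Nat.eq_zero_or_pos n with rfl | hn
    · simp
    rw [Finset.card_product]
    have hb : n / 2 < n := by omega
    have h1 : (Finset.univ.filter fun a : Fin n => a.val < n / 2) = Finset.Iio ⟨n / 2, hb⟩ := by
      ext a; simp [Fin.lt_def]
    have h2 : (Finset.univ.filter fun b : Fin n => n / 2 ≤ b.val) = Finset.Ici ⟨n / 2, hb⟩ := by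
      ext a; simp [Fin.le_def]
    rw [h1, h2, Fin.card_Iio, Fin.card_Ici, half_mul_half]
  · rintro k hk ⟨φ, hinj, hedges, hlast⟩
    have h1 := hedges 0 (by omega)
    have h2 := hedges 1 (by omega)
    simp only [Finset.mem_product, Finset.mem_filter, Finset.mem_univ, true_and, Nat.reduceAdd] at h1 h2
    omega
end

section
/- Let n be a perfect square with m = √n. For s ∈ {0,1,...,m-1} let A_s = {sm+1, sm+2, ..., sm+m} ⊆ [n], and for t ∈ [m] let B_t = [n] \ {t, t+m, t+2m, ..., t+(m-1)m}. Then for every i ∈ [n] there exists exactly one pair (A, B) with A ∈ {A_s} and B ∈ {B_t} such that A \ B = {i}; namely, if i = sm + t with s ∈ {0,...,m-1}, t ∈ [m], then A_s \ B_t = {i}. -/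
lemma key_sdiff (m n : ℕ) (hm : 1 ≤ m) (hn : n = m ^ 2)
    (A : ℕ → Finset ℕ) (hA : ∀ s, A s = Finset.Icc (s * m + 1) (s * m + m))
    (B : ℕ → Finset ℕ)
    (hB : ∀ t, B t = Finset.Icc 1 n \ (Finset.range m).image (fun j => t + j * m))
    (s t : ℕ) (hs : s < m) (ht1 : 1 ≤ t) (ht2 : t ≤ m) :
    A s \ B t = {s * m + t} := by
  have hmm : m ^ 2 = m * m := sq m
  ext x
  simp only [hA, hB, Finset.mem_sdiff, Finset.mem_Icc, Finset.mem_image,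
    Finset.mem_range, Finset.mem_singleton, not_and, not_not, hn, hmm]
  constructor
  · rintro ⟨⟨h1, h2⟩, h3⟩
    have hsm : (s + 1) * m ≤ m * m := Nat.mul_le_mul_right m (by omega)
    rw [add_one_mul] at hsm
    have hx : 1 ≤ x ∧ x ≤ m * m := by omega
    obtain ⟨j, hj, hjx⟩ := h3 hx
    have hjs : j = s := by
      rcases lt_trichotomy j s with h | h | h
      · have : (j + 1) * m ≤ s * m := Nat.mul_le_mul_right m (by omega)
        rw [add_one_mul] at this
        omega
      · exact h
      · have : (s + 1) * m ≤ j * m := Nat.mul_le_mul_right m (by omega)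
        rw [add_one_mul] at this
        omega
    subst hjs
    omega
  · rintro rfl
    have hsm : (s + 1) * m ≤ m * m := Nat.mul_le_mul_right m (by omega)
    rw [add_one_mul] at hsm
    refine ⟨⟨by omega, by omega⟩, fun _ => ⟨s, hs, by omega⟩⟩

/-- The family `F* = {A_s} ∪ {B_t}` on `[n]`, `n = m²`, where
`A_s = {sm+1, …, sm+m}` and `B_t = [n] \ {t, t+m, …, t+(m-1)m}`:
for every `i ∈ [n]` there is exactly one pair `(s, t)` with `A_s \ B_t = {i}`;
namely if `i = sm + t` then `A_s \ B_t = {i}`. -/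
theorem extremal_family_unique_pair (m n : ℕ) (hm : 1 ≤ m) (hn : n = m ^ 2)
    (A : ℕ → Finset ℕ) (hA : ∀ s, A s = Finset.Icc (s * m + 1) (s * m + m))
    (B : ℕ → Finset ℕ)
    (hB : ∀ t, B t = Finset.Icc 1 n \ (Finset.range m).image (fun j => t + j * m)) :
    ∀ i ∈ Finset.Icc 1 n,
      (∃! p : ℕ × ℕ, p.1 < m ∧ p.2 ∈ Finset.Icc 1 m ∧ A p.1 \ B p.2 = {i}) ∧
      (∀ s t : ℕ, s < m → t ∈ Finset.Icc 1 m → i = s * m + t → A s \ B t = {i}) := by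
  intro i hi
  rw [Finset.mem_Icc] at hi
  have hmm : m ^ 2 = m * m := sq m
  -- decompose i
  set s₀ := (i - 1) / m with hs0
  set r₀ := (i - 1) % m with hr0
  have hdm : m * s₀ + r₀ = i - 1 := Nat.div_add_mod (i - 1) m
  have hrm : r₀ < m := Nat.mod_lt _ (by omega)
  have hms : m * s₀ = s₀ * m := Nat.mul_comm m s₀
  have hs0m : s₀ < m := by
    by_contra h
    have : m * m ≤ m * s₀ := Nat.mul_le_mul_left m (by omega)
    omega
  have hieq : i = s₀ * m + (r₀ + 1) := by omega
  have hkey : ∀ s t : ℕ, s < m → t ∈ Finset.Icc 1 m → i = s * m + t → A s \ B t = {i} := by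
    intro s t hs ht hit
    rw [Finset.mem_Icc] at ht
    rw [hit]
    exact key_sdiff m n hm hn A hA B hB s t hs ht.1 ht.2
  refine ⟨⟨(s₀, r₀ + 1), ⟨hs0m, Finset.mem_Icc.mpr ⟨by omega, by omega⟩,
    hkey s₀ (r₀ + 1) hs0m (Finset.mem_Icc.mpr ⟨by omega, by omega⟩) hieq⟩, ?_⟩, hkey⟩
  rintro ⟨s, t⟩ ⟨hs, ht, heq⟩
  rw [Finset.mem_Icc] at ht
  rw [key_sdiff m n hm hn A hA B hB s t hs ht.1 ht.2] at heq
  have hit : s * m + t = i := by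
    have := Finset.singleton_injective heq
    exact this
  have hst : s = s₀ ∧ t = r₀ + 1 := by
    rcases lt_trichotomy s s₀ with h | h | h
    · have : (s + 1) * m ≤ s₀ * m := Nat.mul_le_mul_right m (by omega)
      rw [add_one_mul] at this
      omega
    · have hsm : s * m = s₀ * m := by rw [h]
      exact ⟨h, by omega⟩
    · have : (s₀ + 1) * m ≤ s * m := Nat.mul_le_mul_right m (by omega)
      rw [add_one_mul] at this
      omega
  simp [hst.1, hst.2]
end

section
/- Let P be a poset with legs, n ≥ 3, and let F ⊆ 2^{[n]} be an induced P-saturated family. Then |F| ≥ n + 1. -/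
/-- `φ` is an induced-copy map of the poset `P` into the family `F`
(posets are finite collections of finite subsets of `ℕ`, ordered by inclusion). -/
def IsCopyMap (P F : Finset (Finset ℕ)) (φ : Finset ℕ → Finset ℕ) : Prop :=
  Set.InjOn φ ↑P ∧ (∀ A ∈ P, φ A ∈ F) ∧ ∀ A ∈ P, ∀ B ∈ P, (φ A ⊆ φ B ↔ A ⊆ B)

/-- `F` contains an induced copy of the poset `P`. -/
def ContainsInduced (P F : Finset (Finset ℕ)) : Prop := ∃ φ, IsCopyMap P F φ

/-- `F ⊆ 2^[n]` is induced `P`-saturated. -/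
def InducedSaturated (n : ℕ) (P F : Finset (Finset ℕ)) : Prop :=
  (∀ A ∈ F, A ⊆ Finset.Icc 1 n) ∧ ¬ ContainsInduced P F ∧
  ∀ S ⊆ Finset.Icc 1 n, S ∉ F → ContainsInduced P (insert S F)

/-- `P` has legs `L1, L2` and hip `H`. -/
def LegsAt (P : Finset (Finset ℕ)) (L1 L2 H : Finset ℕ) : Prop :=
  L1 ∈ P ∧ L2 ∈ P ∧ H ∈ P ∧ L1 ≠ L2 ∧ L1 ≠ H ∧ L2 ≠ H ∧
  ¬ L1 ⊆ L2 ∧ ¬ L2 ⊆ L1 ∧ L1 ⊆ H ∧ L2 ⊆ H ∧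
  ∀ A ∈ P, A ≠ L1 → A ≠ L2 → A ≠ H → H ⊆ A

/-- `P` has legs. -/
def HasLegs (P : Finset (Finset ℕ)) : Prop := ∃ L1 L2 H, LegsAt P L1 L2 H

/-- `sat*(n, P)`: the minimum size of an induced `P`-saturated family in `2^[n]`. -/
noncomputable def satStar (n : ℕ) (P : Finset (Finset ℕ)) : ℕ :=
  sInf {k | ∃ F : Finset (Finset ℕ), InducedSaturated n P F ∧ F.card = k}

/-- In a copy into `insert S F` with `F` being `P`-free, some element maps to `S`. -/
lemma copy_uses {P F : Finset (Finset ℕ)} {S : Finset ℕ} {φ : Finset ℕ → Finset ℕ}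
    (hfree : ¬ ContainsInduced P F) (hφ : IsCopyMap P (insert S F) φ) :
    ∃ X ∈ P, φ X = S := by
  by_contra hc
  push_neg at hc
  exact hfree ⟨φ, hφ.1,
    fun A hA => (Finset.mem_insert.mp (hφ.2.1 A hA)).resolve_left (hc A hA), hφ.2.2⟩

/-- Legs are symmetric. -/
lemma legsAt_symm {P : Finset (Finset ℕ)} {L1 L2 H : Finset ℕ} (hL : LegsAt P L1 L2 H) :
    LegsAt P L2 L1 H := by
  obtain ⟨h1, h2, h3, h4, h5, h6, h7, h8, h9, h10, h11⟩ := hL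
  exact ⟨h2, h1, h3, h4.symm, h6, h5, h8, h7, h10, h9,
    fun A hA hA2 hA1 hAH => h11 A hA hA1 hA2 hAH⟩

/-- The swap lemma: given an order-isomorphic map of `P` whose non-leg images lie in `F`,
and two incomparable members of `F` below the image of the hip, `F` contains an induced
copy of `P`. -/
lemma legswap {P F : Finset (Finset ℕ)} {L1 L2 H : Finset ℕ} (hL : LegsAt P L1 L2 H)
    (φ : Finset ℕ → Finset ℕ)
    (hiso : ∀ A ∈ P, ∀ B ∈ P, (φ A ⊆ φ B ↔ A ⊆ B))
    (himg : ∀ Z ∈ P, Z ≠ L1 → Z ≠ L2 → φ Z ∈ F)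
    (p q : Finset ℕ) (hp : p ∈ F) (hq : q ∈ F)
    (hpq : ¬ p ⊆ q) (hqp : ¬ q ⊆ p) (hph : p ⊆ φ H) (hqh : q ⊆ φ H) :
    ContainsInduced P F := by
  classical
  obtain ⟨hL1P, hL2P, hHP, hne12, hne1H, hne2H, h12, h21, h1H, h2H, hcl⟩ := hL
  have hfactA : ∀ Z ∈ P, Z ≠ L1 → Z ≠ L2 → H ⊆ Z := by
    intro Z hZ hZ1 hZ2
    by_cases hZH : Z = H
    · subst hZH; exact Finset.Subset.refl _
    · exact hcl Z hZ hZ1 hZ2 hZH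
  have hfactB1 : ∀ Z ∈ P, Z ≠ L1 → Z ≠ L2 → ¬ Z ⊆ L1 := by
    intro Z hZ hZ1 hZ2 hsub
    exact hne1H (Finset.Subset.antisymm h1H ((hfactA Z hZ hZ1 hZ2).trans hsub))
  have hfactB2 : ∀ Z ∈ P, Z ≠ L1 → Z ≠ L2 → ¬ Z ⊆ L2 := by
    intro Z hZ hZ1 hZ2 hsub
    exact hne2H (Finset.Subset.antisymm h2H ((hfactA Z hZ hZ1 hZ2).trans hsub))
  have hfactC : ∀ Z ∈ P, Z ≠ L1 → Z ≠ L2 →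
      p ⊆ φ Z ∧ q ⊆ φ Z ∧ ¬ φ Z ⊆ p ∧ ¬ φ Z ⊆ q := by
    intro Z hZ hZ1 hZ2
    have hHZ : φ H ⊆ φ Z := (hiso H hHP Z hZ).mpr (hfactA Z hZ hZ1 hZ2)
    exact ⟨hph.trans hHZ, hqh.trans hHZ,
      fun hc => hqp (hqh.trans (hHZ.trans hc)),
      fun hc => hpq (hph.trans (hHZ.trans hc))⟩
  set ψ : Finset ℕ → Finset ℕ :=
    fun Z => if Z = L1 then p else if Z = L2 then q else φ Z with hψdef
  have hψ1 : ψ L1 = p := by simp [hψdef]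
  have hψ2 : ψ L2 = q := by simp [hψdef, Ne.symm hne12]
  have hψo : ∀ Z, Z ≠ L1 → Z ≠ L2 → ψ Z = φ Z := by
    intro Z hZ1 hZ2; simp [hψdef, hZ1, hZ2]
  have hiso' : ∀ A ∈ P, ∀ B ∈ P, (ψ A ⊆ ψ B ↔ A ⊆ B) := by
    intro A hA B hB
    by_cases hA1 : A = L1
    · rw [hA1, hψ1]
      by_cases hB1 : B = L1
      · rw [hB1, hψ1]; exact iff_of_true (Finset.Subset.refl _) (Finset.Subset.refl _)
      by_cases hB2 : B = L2
      · rw [hB2, hψ2]; exact iff_of_false hpq h12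
      · rw [hψo B hB1 hB2]
        exact iff_of_true (hfactC B hB hB1 hB2).1 (h1H.trans (hfactA B hB hB1 hB2))
    by_cases hA2 : A = L2
    · rw [hA2, hψ2]
      by_cases hB1 : B = L1
      · rw [hB1, hψ1]; exact iff_of_false hqp h21
      by_cases hB2 : B = L2
      · rw [hB2, hψ2]; exact iff_of_true (Finset.Subset.refl _) (Finset.Subset.refl _)
      · rw [hψo B hB1 hB2]
        exact iff_of_true (hfactC B hB hB1 hB2).2.1 (h2H.trans (hfactA B hB hB1 hB2))
    · rw [hψo A hA1 hA2]
      by_cases hB1 : B = L1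
      · rw [hB1, hψ1]
        exact iff_of_false (hfactC A hA hA1 hA2).2.2.1 (hfactB1 A hA hA1 hA2)
      by_cases hB2 : B = L2
      · rw [hB2, hψ2]
        exact iff_of_false (hfactC A hA hA1 hA2).2.2.2 (hfactB2 A hA hA1 hA2)
      · rw [hψo B hB1 hB2]
        exact hiso A hA B hB
  refine ⟨ψ, ?_, ?_, hiso'⟩
  · intro A hA B hB heq
    have hA' : A ∈ P := hA
    have hB' : B ∈ P := hB
    exact Finset.Subset.antisymm
      ((hiso' A hA' B hB').mp (heq ▸ Finset.Subset.refl (ψ A)))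
      ((hiso' B hB' A hA').mp (heq ▸ Finset.Subset.refl (ψ B)))
  · intro Z hZ
    by_cases hZ1 : Z = L1
    · subst hZ1; rw [hψ1]; exact hp
    by_cases hZ2 : Z = L2
    · subst hZ2; rw [hψ2]; exact hq
    · rw [hψo Z hZ1 hZ2]; exact himg Z hZ hZ1 hZ2

/-- An induced saturated family for a poset with legs contains the empty set. -/
lemma empty_mem {P F : Finset (Finset ℕ)} {L1 L2 H : Finset ℕ} (hL : LegsAt P L1 L2 H)
    {n : ℕ} (hF : InducedSaturated n P F) : ∅ ∈ F := by
  obtain ⟨hsub, hfree, hsat⟩ := hF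
  by_contra hc
  obtain ⟨φ, hφ⟩ := hsat ∅ (Finset.empty_subset _) hc
  obtain ⟨X, hXP, hXS⟩ := copy_uses hfree hφ
  obtain ⟨hL1P, hL2P, hHP, hne12, hne1H, hne2H, h12, h21, h1H, h2H, hcl⟩ := hL
  have hXall : ∀ Z ∈ P, X ⊆ Z := fun Z hZ =>
    (hφ.2.2 X hXP Z hZ).mp (by rw [hXS]; exact Finset.empty_subset _)
  by_cases hX1 : X = L1
  · exact h12 (hX1 ▸ hXall L2 hL2P)
  by_cases hX2 : X = L2
  · exact h21 (hX2 ▸ hXall L1 hL1P)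
  · have hHX : H ⊆ X := by
      by_cases hXH : X = H
      · subst hXH; exact Finset.Subset.refl _
      · exact hcl X hXP hX1 hX2 hXH
    exact hne1H (Finset.Subset.antisymm h1H (hHX.trans (hXall L1 hL1P)))

lemma erase_sub_of_sub_insert {a w : Finset ℕ} {i : ℕ} (h : a ⊆ insert i w) :
    a.erase i ⊆ w := by
  intro x hx
  rcases Finset.mem_insert.mp (h (Finset.mem_of_mem_erase hx)) with h' | h'
  · exact absurd h' (Finset.ne_of_mem_erase hx)
  · exact h'

lemma sub_of_sub_insert {a w : Finset ℕ} {i : ℕ} (h : a ⊆ insert i w) (hia : i ∉ a) :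
    a ⊆ w := by
  rw [← Finset.erase_eq_of_notMem hia]
  exact erase_sub_of_sub_insert h

/-- The key leg case of the edge argument. -/
lemma leg_case {P F : Finset (Finset ℕ)} {L1 L2 H : Finset ℕ} (hL : LegsAt P L1 L2 H)
    (hfree : ¬ ContainsInduced P F) {i : ℕ} {w : Finset ℕ}
    (hedge : ∀ A ∈ F, i ∉ A → insert i A ∉ F)
    (hwF : w ∈ F) (hiw : i ∉ w)
    (hmax : ∀ b ∈ F, i ∉ b → w ⊂ b →
      ¬((∀ a ∈ F, i ∈ a → ¬ a.erase i ⊆ b) ∧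
        (∀ p ∈ F, ∀ q ∈ F, p ⊆ b → q ⊆ b → p ⊆ q ∨ q ⊆ p)))
    {φ : Finset ℕ → Finset ℕ} (hφ : IsCopyMap P (insert (insert i w) F) φ)
    (hXS : φ L1 = insert i w) : False := by
  classical
  have hLc := hL
  obtain ⟨hL1P, hL2P, hHP, hne12, hne1H, hne2H, h12, h21, h1H, h2H, hcl⟩ := hLc
  have hinj := hφ.1
  have hmem := hφ.2.1
  have hiso := hφ.2.2
  have hb_mem : φ L2 ∈ F := by
    rcases Finset.mem_insert.mp (hmem L2 hL2P) with h | h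
    · exact absurd (hinj (Finset.mem_coe.mpr hL2P) (Finset.mem_coe.mpr hL1P)
        (h.trans hXS.symm)) (Ne.symm hne12)
    · exact h
  have hh_mem : φ H ∈ F := by
    rcases Finset.mem_insert.mp (hmem H hHP) with h | h
    · exact absurd (hinj (Finset.mem_coe.mpr hHP) (Finset.mem_coe.mpr hL1P)
        (h.trans hXS.symm)) (Ne.symm hne1H)
    · exact h
  have hSh : insert i w ⊆ φ H := by
    rw [← hXS]; exact (hiso L1 hL1P H hHP).mpr h1H
  have hbh : φ L2 ⊆ φ H := (hiso L2 hL2P H hHP).mpr h2H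
  have hbS : ¬ φ L2 ⊆ insert i w := by
    rw [← hXS]; exact fun hh => h21 ((hiso L2 hL2P L1 hL1P).mp hh)
  have hSb : ¬ insert i w ⊆ φ L2 := by
    rw [← hXS]; exact fun hh => h12 ((hiso L1 hL1P L2 hL2P).mp hh)
  have hih : i ∈ φ H := hSh (Finset.mem_insert_self i w)
  have hwS : w ⊆ insert i w := Finset.subset_insert i w
  have himg : ∀ Z ∈ P, Z ≠ L1 → Z ≠ L2 → φ Z ∈ F := by
    intro Z hZ hZ1 _
    rcases Finset.mem_insert.mp (hmem Z hZ) with h | h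
    · exact absurd (hinj (Finset.mem_coe.mpr hZ) (Finset.mem_coe.mpr hL1P)
        (h.trans hXS.symm)) hZ1
    · exact h
  by_cases hwb : w ⊆ φ L2
  · have hib : i ∉ φ L2 := fun hib => hSb (Finset.insert_subset_iff.mpr ⟨hib, hwb⟩)
    have hssub : w ⊂ φ L2 := by
      rw [Finset.ssubset_def]
      exact ⟨hwb, fun h => hbS (h.trans hwS)⟩
    have hnb := hmax (φ L2) hb_mem hib hssub
    rw [not_and_or] at hnb
    rcases hnb with h2 | h3
    · push_neg at h2
      obtain ⟨a, haF, hia, hsub⟩ := h2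
      have hasub : a ⊆ φ H := by
        intro x hx
        by_cases hxi : x = i
        · subst hxi; exact hih
        · exact hbh (hsub (Finset.mem_erase.mpr ⟨hxi, hx⟩))
      by_cases hba : φ L2 ⊆ a
      · have h1' : φ L2 ⊆ a.erase i := Finset.subset_erase.mpr ⟨hba, hib⟩
        have h2' : a.erase i = φ L2 := Finset.Subset.antisymm hsub h1'
        have h3' : insert i (φ L2) = a := by
          rw [← h2']; exact Finset.insert_erase hia
        exact hedge (φ L2) hb_mem hib (h3' ▸ haF)
      · have hab : ¬ a ⊆ φ L2 := fun h => hib (h hia)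
        exact hfree (legswap hL φ hiso himg a (φ L2) haF hb_mem hab hba hasub hbh)
    · push_neg at h3
      obtain ⟨p, hp, q, hq, hpb, hqb, hpq, hqp⟩ := h3
      exact hfree (legswap hL φ hiso himg p q hp hq hpq hqp (hpb.trans hbh) (hqb.trans hbh))
  · exact hfree (legswap hL φ hiso himg w (φ L2) hwF hb_mem hwb
      (fun h => hbS (h.trans hwS)) (hwS.trans hSh) hbh)

/-- For every coordinate, a saturated family contains an edge of the hypercube in
that direction. -/
lemma exists_edge {P F : Finset (Finset ℕ)} {L1 L2 H : Finset ℕ} (hL : LegsAt P L1 L2 H)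
    {n : ℕ} (hF : InducedSaturated n P F) {i : ℕ} (hi : i ∈ Finset.Icc 1 n) :
    ∃ A ∈ F, i ∉ A ∧ insert i A ∈ F := by
  classical
  have hempty : ∅ ∈ F := empty_mem hL hF
  by_contra hcon
  push_neg at hcon
  obtain ⟨hPsub, hfree, hsat⟩ := hF
  have hLc := hL
  obtain ⟨hL1P, hL2P, hHP, hne12, hne1H, hne2H, h12, h21, h1H, h2H, hcl⟩ := hLc
  set W : Finset (Finset ℕ) := F.filter (fun w => i ∉ w ∧
      (∀ a ∈ F, i ∈ a → ¬ a.erase i ⊆ w) ∧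
      (∀ p ∈ F, ∀ q ∈ F, p ⊆ w → q ⊆ w → p ⊆ q ∨ q ⊆ p)) with hWdef
  have hWne : (∅ : Finset ℕ) ∈ W := by
    rw [hWdef, Finset.mem_filter]
    refine ⟨hempty, Finset.notMem_empty i, ?_, ?_⟩
    · intro a haF hia hsub
      have h0 : a.erase i = ∅ := Finset.subset_empty.mp hsub
      rcases (Finset.erase_eq_empty_iff a i).mp h0 with h' | h'
      · exact absurd (h' ▸ hia) (Finset.notMem_empty i)
      · exact hcon ∅ hempty (Finset.notMem_empty i) (by rw [show insert i (∅ : Finset ℕ) = {i} from rfl, ← h']; exact haF)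
    · intro p hp q hq hpw hqw
      left
      rw [Finset.subset_empty.mp hpw]
      exact Finset.empty_subset q
  obtain ⟨w, hwW, hmaxcard⟩ := W.exists_max_image Finset.card ⟨∅, hWne⟩
  have hwW' := hwW
  rw [hWdef, Finset.mem_filter] at hwW'
  obtain ⟨hwF, hiw, hprop2, hprop3⟩ := hwW'
  have hmax : ∀ b ∈ F, i ∉ b → w ⊂ b →
      ¬((∀ a ∈ F, i ∈ a → ¬ a.erase i ⊆ b) ∧
        (∀ p ∈ F, ∀ q ∈ F, p ⊆ b → q ⊆ b → p ⊆ q ∨ q ⊆ p)) := by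
    rintro b hbF hib hwb ⟨hb2, hb3⟩
    have hbW : b ∈ W := by rw [hWdef, Finset.mem_filter]; exact ⟨hbF, hib, hb2, hb3⟩
    exact absurd (hmaxcard b hbW) (Nat.not_le.mpr (Finset.card_lt_card hwb))
  have hSsub : insert i w ⊆ Finset.Icc 1 n :=
    Finset.insert_subset_iff.mpr ⟨hi, hPsub w hwF⟩
  have hSF : insert i w ∉ F := hcon w hwF hiw
  obtain ⟨φ, hφ⟩ := hsat (insert i w) hSsub hSF
  obtain ⟨X, hXP, hXS⟩ := copy_uses hfree hφ
  have hinj := hφ.1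
  have hmem := hφ.2.1
  have hiso := hφ.2.2
  by_cases hX1 : X = L1
  · exact leg_case hL hfree hcon hwF hiw hmax hφ (hX1 ▸ hXS)
  by_cases hX2 : X = L2
  · exact leg_case (legsAt_symm hL) hfree hcon hwF hiw hmax hφ (hX2 ▸ hXS)
  by_cases hXH : X = H
  · have hXS' : φ H = insert i w := hXH ▸ hXS
    have ha_mem : φ L1 ∈ F := by
      rcases Finset.mem_insert.mp (hmem L1 hL1P) with h | h
      · exact absurd (hinj (Finset.mem_coe.mpr hL1P) (Finset.mem_coe.mpr hHP)
          (h.trans hXS'.symm)) hne1H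
      · exact h
    have hb_mem : φ L2 ∈ F := by
      rcases Finset.mem_insert.mp (hmem L2 hL2P) with h | h
      · exact absurd (hinj (Finset.mem_coe.mpr hL2P) (Finset.mem_coe.mpr hHP)
          (h.trans hXS'.symm)) hne2H
      · exact h
    have ha_sub : φ L1 ⊆ insert i w := by
      rw [← hXS']; exact (hiso L1 hL1P H hHP).mpr h1H
    have hb_sub : φ L2 ⊆ insert i w := by
      rw [← hXS']; exact (hiso L2 hL2P H hHP).mpr h2H
    have hab : ¬ φ L1 ⊆ φ L2 := fun hh => h12 ((hiso L1 hL1P L2 hL2P).mp hh)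
    have hba : ¬ φ L2 ⊆ φ L1 := fun hh => h21 ((hiso L2 hL2P L1 hL1P).mp hh)
    by_cases hia : i ∈ φ L1
    · exact hprop2 (φ L1) ha_mem hia (erase_sub_of_sub_insert ha_sub)
    by_cases hib : i ∈ φ L2
    · exact hprop2 (φ L2) hb_mem hib (erase_sub_of_sub_insert hb_sub)
    · rcases hprop3 (φ L1) ha_mem (φ L2) hb_mem (sub_of_sub_insert ha_sub hia)
        (sub_of_sub_insert hb_sub hib) with h | h
      · exact hab h
      · exact hba h
  · have hHX : H ⊆ X := hcl X hXP hX1 hX2 hXH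
    have hh_mem : φ H ∈ F := by
      rcases Finset.mem_insert.mp (hmem H hHP) with h | h
      · exact absurd (hinj (Finset.mem_coe.mpr hHP) (Finset.mem_coe.mpr hXP)
          (h.trans hXS.symm)) (fun he => hXH he.symm)
      · exact h
    have hh_sub : φ H ⊆ insert i w := by
      rw [← hXS]; exact (hiso H hHP X hXP).mpr hHX
    by_cases hih : i ∈ φ H
    · exact hprop2 (φ H) hh_mem hih (erase_sub_of_sub_insert hh_sub)
    · have hhw : φ H ⊆ w := sub_of_sub_insert hh_sub hih
      have ha_mem : φ L1 ∈ F := by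
        rcases Finset.mem_insert.mp (hmem L1 hL1P) with h | h
        · exact absurd (hinj (Finset.mem_coe.mpr hL1P) (Finset.mem_coe.mpr hXP)
            (h.trans hXS.symm)).symm hX1
        · exact h
      have hb_mem : φ L2 ∈ F := by
        rcases Finset.mem_insert.mp (hmem L2 hL2P) with h | h
        · exact absurd (hinj (Finset.mem_coe.mpr hL2P) (Finset.mem_coe.mpr hXP)
            (h.trans hXS.symm)).symm hX2
        · exact h
      have ha_sub : φ L1 ⊆ w := ((hiso L1 hL1P H hHP).mpr h1H).trans hhw
      have hb_sub : φ L2 ⊆ w := ((hiso L2 hL2P H hHP).mpr h2H).trans hhw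
      rcases hprop3 (φ L1) ha_mem (φ L2) hb_mem ha_sub hb_sub with h | h
      · exact h12 ((hiso L1 hL1P L2 hL2P).mp h)
      · exact h21 ((hiso L2 hL2P L1 hL1P).mp h)

/-- A nonempty family with a hypercube edge in every direction of `I` has more than
`|I|` members. -/
lemma card_of_edges : ∀ (I : Finset ℕ) (G : Finset (Finset ℕ)), G.Nonempty →
    (∀ i ∈ I, ∃ A ∈ G, i ∉ A ∧ insert i A ∈ G) → I.card + 1 ≤ G.card := by
  classical
  intro I
  induction I using Finset.induction_on with
  | empty =>
    intro G hne _
    simpa using Finset.card_pos.mpr hne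
  | @insert x I hx ih =>
    intro G hne h
    obtain ⟨A, hA, hxA, hA'⟩ := h x (Finset.mem_insert_self x I)
    set e : Finset ℕ := insert x A with hedef
    have heG : e ∈ G := hA'
    set er : Finset ℕ → Finset ℕ := fun B => B.erase x with herdef
    have himg : G.image er = (G.erase e).image er := by
      apply Finset.Subset.antisymm
      · intro y hy
        obtain ⟨B, hB, rfl⟩ := Finset.mem_image.mp hy
        by_cases hBe : B = e
        · subst hBe
          refine Finset.mem_image.mpr ⟨A, Finset.mem_erase.mpr ⟨?_, hA⟩, ?_⟩
          · exact fun h' => hxA (h' ▸ Finset.mem_insert_self x A)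
          · show A.erase x = e.erase x
            rw [hedef, Finset.erase_insert hxA, Finset.erase_eq_of_notMem hxA]
        · exact Finset.mem_image.mpr ⟨B, Finset.mem_erase.mpr ⟨hBe, hB⟩, rfl⟩
      · exact Finset.image_subset_image (Finset.erase_subset _ _)
    have hcard1 : (G.image er).card ≤ G.card - 1 := by
      rw [himg]
      calc ((G.erase e).image er).card ≤ (G.erase e).card := Finset.card_image_le
        _ = G.card - 1 := Finset.card_erase_of_mem heG
    have hG' : (G.image er).Nonempty := ⟨er A, Finset.mem_image.mpr ⟨A, hA, rfl⟩⟩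
    have hedge' : ∀ i ∈ I, ∃ B ∈ G.image er, i ∉ B ∧ insert i B ∈ G.image er := by
      intro i hi
      obtain ⟨B, hB, hiB, hB'⟩ := h i (Finset.mem_insert_of_mem hi)
      have hix : i ≠ x := fun h' => hx (h' ▸ hi)
      refine ⟨B.erase x, Finset.mem_image.mpr ⟨B, hB, rfl⟩,
        fun hc => hiB (Finset.mem_of_mem_erase hc), ?_⟩
      refine Finset.mem_image.mpr ⟨insert i B, hB', ?_⟩
      show (insert i B).erase x = insert i (B.erase x)
      exact Finset.erase_insert_of_ne hix
    have hIH := ih (G.image er) hG' hedge'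
    have hpos : 0 < G.card := Finset.card_pos.mpr ⟨e, heG⟩
    rw [Finset.card_insert_of_notMem hx]
    omega

/-- If `P` is a poset with legs, `n ≥ 3`, and `F ⊆ 2^[n]` is induced `P`-saturated,
then `|F| ≥ n + 1`. -/
theorem legs_saturated_lower_bound (P : Finset (Finset ℕ)) (hP : HasLegs P)
    (n : ℕ) (hn : 3 ≤ n) (F : Finset (Finset ℕ))
    (hF : InducedSaturated n P F) : n + 1 ≤ F.card := by
  obtain ⟨L1, L2, H, hL⟩ := hP
  have hempty : ∅ ∈ F := empty_mem hL hF
  have hcard := card_of_edges (Finset.Icc 1 n) F ⟨∅, hempty⟩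
    (fun i hi => exists_edge hL hF hi)
  rwa [Nat.card_Icc, Nat.add_sub_cancel] at hcard
end

section
/- For every n ≥ 3, every induced Y-saturated family F ⊆ 2^{[n]} satisfies |F| ≥ n + 2. -/
/-- The poset `Y`: two incomparable minimal elements below a common element,
which lies below a single maximal element. -/
def posetY : Finset (Finset ℕ) := {{1}, {2}, {1, 2}, {1, 2, 3}}

def YQuad (G : Finset (Finset ℕ)) : Prop :=
  ∃ A ∈ G, ∃ B ∈ G, ∃ C ∈ G, ∃ D ∈ G,
    ¬A ⊆ B ∧ ¬B ⊆ A ∧ A ⊆ C ∧ B ⊆ C ∧ C ⊆ D ∧ ¬D ⊆ C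

def phiY (A B C D : Finset ℕ) (X : Finset ℕ) : Finset ℕ :=
  if X = {1} then A else if X = {2} then B else if X = {1,2} then C else D

lemma phiY_1 (A B C D : Finset ℕ) : phiY A B C D {1} = A := if_pos rfl
lemma phiY_2 (A B C D : Finset ℕ) : phiY A B C D {2} = B := by
  unfold phiY
  rw [if_neg (by decide), if_pos rfl]
lemma phiY_12 (A B C D : Finset ℕ) : phiY A B C D {1,2} = C := by
  unfold phiY
  rw [if_neg (by decide), if_neg (by decide), if_pos rfl]
lemma phiY_123 (A B C D : Finset ℕ) : phiY A B C D {1,2,3} = D := by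
  unfold phiY
  rw [if_neg (by decide), if_neg (by decide), if_neg (by decide)]

lemma mem_posetY (x : Finset ℕ) :
    x ∈ posetY ↔ x = {1} ∨ x = {2} ∨ x = {1,2} ∨ x = {1,2,3} := by
  simp [posetY]

theorem yquad_contains {G : Finset (Finset ℕ)} (h : YQuad G) : ContainsInduced posetY G := by
  obtain ⟨A, hA, B, hB, C, hC, D, hD, h1, h2, h3, h4, h5, h6⟩ := h
  have hAD : A ⊆ D := h3.trans h5
  have hBD : B ⊆ D := h4.trans h5
  have hnCA : ¬C ⊆ A := fun hh => h2 (h4.trans hh)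
  have hnCB : ¬C ⊆ B := fun hh => h1 (h3.trans hh)
  have hnDA : ¬D ⊆ A := fun hh => h6 (hh.trans h3)
  have hnDB : ¬D ⊆ B := fun hh => h6 (hh.trans h4)
  have hAB : A ≠ B := fun e => h1 (by rw [e])
  have hAC : A ≠ C := fun e => h2 (by rw [e]; exact h4)
  have hBC : B ≠ C := fun e => h1 (by rw [e]; exact h3)
  have hAD' : A ≠ D := fun e => h6 (by rw [← e]; exact h3)
  have hBD' : B ≠ D := fun e => h6 (by rw [← e]; exact h4)
  have hCD : C ≠ D := fun e => h6 (by rw [e])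
  refine ⟨phiY A B C D, ?_, ?_, ?_⟩
  · intro x hx y hy hxy
    rcases (mem_posetY x).1 (Finset.mem_coe.1 hx) with rfl|rfl|rfl|rfl <;>
    rcases (mem_posetY y).1 (Finset.mem_coe.1 hy) with rfl|rfl|rfl|rfl <;>
    simp only [phiY_1, phiY_2, phiY_12, phiY_123] at hxy <;>
    first
    | rfl
    | exact absurd hxy hAB
    | exact absurd hxy hAC
    | exact absurd hxy hAD'
    | exact absurd hxy hBC
    | exact absurd hxy hBD'
    | exact absurd hxy hCD
    | exact absurd hxy.symm hAB
    | exact absurd hxy.symm hAC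
    | exact absurd hxy.symm hAD'
    | exact absurd hxy.symm hBC
    | exact absurd hxy.symm hBD'
    | exact absurd hxy.symm hCD
  · intro X hX
    rcases (mem_posetY X).1 hX with rfl|rfl|rfl|rfl <;>
      simp only [phiY_1, phiY_2, phiY_12, phiY_123] <;> assumption
  · intro X hX Y hY
    rcases (mem_posetY X).1 hX with rfl|rfl|rfl|rfl <;>
    rcases (mem_posetY Y).1 hY with rfl|rfl|rfl|rfl <;>
    simp only [phiY_1, phiY_2, phiY_12, phiY_123] <;>
    first
    | exact iff_of_true Finset.Subset.rfl (by decide)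
    | exact iff_of_true h3 (by decide)
    | exact iff_of_true h4 (by decide)
    | exact iff_of_true h5 (by decide)
    | exact iff_of_true hAD (by decide)
    | exact iff_of_true hBD (by decide)
    | exact iff_of_false h1 (by decide)
    | exact iff_of_false h2 (by decide)
    | exact iff_of_false h6 (by decide)
    | exact iff_of_false hnCA (by decide)
    | exact iff_of_false hnCB (by decide)
    | exact iff_of_false hnDA (by decide)
    | exact iff_of_false hnDB (by decide)

theorem contains_yquad {G : Finset (Finset ℕ)} (h : ContainsInduced posetY G) : YQuad G := by
  obtain ⟨φ, hinj, hmem, hiff⟩ := h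
  have m1 : ({1}:Finset ℕ) ∈ posetY := by decide
  have m2 : ({2}:Finset ℕ) ∈ posetY := by decide
  have m12 : ({1,2}:Finset ℕ) ∈ posetY := by decide
  have m123 : ({1,2,3}:Finset ℕ) ∈ posetY := by decide
  refine ⟨φ {1}, hmem _ m1, φ {2}, hmem _ m2, φ {1,2}, hmem _ m12, φ {1,2,3}, hmem _ m123,
    ?_, ?_, ?_, ?_, ?_, ?_⟩
  · exact fun hh => (by decide : ¬({1}:Finset ℕ) ⊆ {2}) ((hiff _ m1 _ m2).1 hh)
  · exact fun hh => (by decide : ¬({2}:Finset ℕ) ⊆ {1}) ((hiff _ m2 _ m1).1 hh)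
  · exact (hiff _ m1 _ m12).2 (by decide)
  · exact (hiff _ m2 _ m12).2 (by decide)
  · exact (hiff _ m12 _ m123).2 (by decide)
  · exact fun hh => (by decide : ¬({1,2,3}:Finset ℕ) ⊆ {1,2}) ((hiff _ m123 _ m12).1 hh)

/-- the down-set of `X` in `F` is a chain -/
def Chainy (F : Finset (Finset ℕ)) (X : Finset ℕ) : Prop :=
  ∀ Z1 ∈ F, Z1 ⊆ X → ∀ Z2 ∈ F, Z2 ⊆ X → Z1 ⊆ Z2 ∨ Z2 ⊆ Z1

/-- `X` is a chain-downset member of `F` introducing the element `i`. -/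
def IntroNode (F : Finset (Finset ℕ)) (X : Finset ℕ) (i : ℕ) : Prop :=
  X ∈ F ∧ Chainy F X ∧ i ∈ X ∧ ∀ Z ∈ F, Z ⊆ X → Z ≠ X → i ∉ Z

/-- For `n ≥ 3`, every induced `Y`-saturated family `F ⊆ 2^[n]` has `|F| ≥ n + 2`. -/
theorem y_saturated_lower_bound (n : ℕ) (hn : 3 ≤ n) (F : Finset (Finset ℕ))
    (hF : InducedSaturated n posetY F) : n + 2 ≤ F.card := by
  classical
  obtain ⟨hsub, hfree', hsat'⟩ := hF
  have hfree : ¬ YQuad F := fun h => hfree' (yquad_contains h)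
  have hsat : ∀ S ⊆ Finset.Icc 1 n, S ∉ F → YQuad (insert S F) :=
    fun S h1 h2 => contains_yquad (hsat' S h1 h2)
  set Ω := Finset.Icc 1 n with hΩ
  -- role trichotomy for an added set S
  have role : ∀ S, S ∉ F → YQuad (insert S F) →
      (∃ B ∈ F, ∃ C ∈ F, ∃ D ∈ F,
        ¬S ⊆ B ∧ ¬B ⊆ S ∧ S ⊆ C ∧ B ⊆ C ∧ C ⊆ D ∧ ¬D ⊆ C) ∨
      (∃ A ∈ F, ∃ B ∈ F, ∃ D ∈ F,
        ¬A ⊆ B ∧ ¬B ⊆ A ∧ A ⊆ S ∧ B ⊆ S ∧ S ⊆ D ∧ ¬D ⊆ S) ∨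
      (∃ A ∈ F, ∃ B ∈ F, ∃ C ∈ F,
        ¬A ⊆ B ∧ ¬B ⊆ A ∧ A ⊆ C ∧ B ⊆ C ∧ C ⊆ S ∧ ¬S ⊆ C) := by
    intro S hS h
    obtain ⟨A, hA, B, hB, C, hC, D, hD, h1, h2, h3, h4, h5, h6⟩ := h
    by_cases eA : A = S
    · by_cases eB : B = S
      · exact absurd (show A ⊆ B by rw [eA, eB]) h1
      · by_cases eC : C = S
        · exact absurd (show B ⊆ A by rw [eA, ← eC]; exact h4) h2
        · by_cases eD : D = S
          · exact absurd (show D ⊆ C by rw [eD, ← eA]; exact h3) h6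
          · exact Or.inl ⟨B, (Finset.mem_insert.1 hB).resolve_left eB,
              C, (Finset.mem_insert.1 hC).resolve_left eC,
              D, (Finset.mem_insert.1 hD).resolve_left eD,
              by rw [← eA]; exact h1, by rw [← eA]; exact h2, by rw [← eA]; exact h3,
              h4, h5, h6⟩
    · by_cases eB : B = S
      · by_cases eC : C = S
        · exact absurd (show A ⊆ B by rw [eB, ← eC]; exact h3) h1
        · by_cases eD : D = S
          · exact absurd (show D ⊆ C by rw [eD, ← eB]; exact h4) h6
          · exact Or.inl ⟨A, (Finset.mem_insert.1 hA).resolve_left eA,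
              C, (Finset.mem_insert.1 hC).resolve_left eC,
              D, (Finset.mem_insert.1 hD).resolve_left eD,
              by rw [← eB]; exact h2, by rw [← eB]; exact h1, by rw [← eB]; exact h4,
              h3, h5, h6⟩
      · by_cases eC : C = S
        · by_cases eD : D = S
          · exact absurd (show D ⊆ C by rw [eD, ← eC]) h6
          · exact Or.inr (Or.inl ⟨A, (Finset.mem_insert.1 hA).resolve_left eA,
              B, (Finset.mem_insert.1 hB).resolve_left eB,
              D, (Finset.mem_insert.1 hD).resolve_left eD,
              h1, h2, by rw [← eC]; exact h3, by rw [← eC]; exact h4,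
              by rw [← eC]; exact h5, by rw [← eC]; exact h6⟩)
        · by_cases eD : D = S
          · exact Or.inr (Or.inr ⟨A, (Finset.mem_insert.1 hA).resolve_left eA,
              B, (Finset.mem_insert.1 hB).resolve_left eB,
              C, (Finset.mem_insert.1 hC).resolve_left eC,
              h1, h2, h3, h4, by rw [← eD]; exact h5, by rw [← eD]; exact h6⟩)
          · exact absurd ⟨A, (Finset.mem_insert.1 hA).resolve_left eA,
              B, (Finset.mem_insert.1 hB).resolve_left eB,
              C, (Finset.mem_insert.1 hC).resolve_left eC,
              D, (Finset.mem_insert.1 hD).resolve_left eD,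
              h1, h2, h3, h4, h5, h6⟩ hfree
  -- the empty set belongs to F
  have hempty : ∅ ∈ F := by
    by_contra hne
    rcases role ∅ hne (hsat ∅ (Finset.empty_subset _) hne) with
      ⟨B,hB,C,hC,D,hD,p1,p2,p3,p4,p5,p6⟩|⟨A,hA,B,hB,D,hD,p1,p2,p3,p4,p5,p6⟩|
      ⟨A,hA,B,hB,C,hC,p1,p2,p3,p4,p5,p6⟩
    · exact p1 (Finset.empty_subset B)
    · have hAe : A = ∅ := Finset.subset_empty.1 p3
      exact p1 (by rw [hAe]; exact Finset.empty_subset B)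
    · have hAe : A = ∅ := Finset.subset_empty.1 (p3.trans p5)
      exact p1 (by rw [hAe]; exact Finset.empty_subset B)
  -- a set with a strict superset in F has a chain down-set
  have hslim : ∀ C ∈ F, ∀ D ∈ F, C ⊆ D → ¬D ⊆ C → Chainy F C := by
    intro C hC D hD hCD hDC Z1 hZ1 hs1 Z2 hZ2 hs2
    by_contra hc
    push_neg at hc
    exact hfree ⟨Z1, hZ1, Z2, hZ2, C, hC, D, hD, hc.1, hc.2, hs1, hs2, hCD, hDC⟩
  -- there exists a V-set: a member of F containing an incomparable pair of F
  have hVex : ∃ V ∈ F, ∃ A ∈ F, ∃ B ∈ F, ¬A ⊆ B ∧ ¬B ⊆ A ∧ A ⊆ V ∧ B ⊆ V := by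
    by_contra hno
    have noV : ∀ V ∈ F, ∀ A ∈ F, ∀ B ∈ F, A ⊆ V → B ⊆ V → A ⊆ B ∨ B ⊆ A := by
      intro V hV A hA B hB hAV hBV
      by_contra hc
      push_neg at hc
      exact hno ⟨V, hV, A, hA, B, hB, hc.1, hc.2, hAV, hBV⟩
    have hΩF : Ω ∈ F := by
      by_contra hΩn
      rcases role Ω hΩn (hsat Ω Finset.Subset.rfl hΩn) with
        ⟨B,hB,C,hC,D,hD,p1,p2,p3,p4,p5,p6⟩|⟨A,hA,B,hB,D,hD,p1,p2,p3,p4,p5,p6⟩|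
        ⟨A,hA,B,hB,C,hC,p1,p2,p3,p4,p5,p6⟩
      · exact p2 (hsub B hB)
      · exact p6 (hsub D hD)
      · exact (noV C hC A hA B hB p3 p4).elim p1 p2
    have hco : ∀ i ∈ Ω, Ω.erase i ∈ F := by
      intro i hi
      by_contra hei
      have hsubΩ : Ω.erase i ⊆ Ω := Finset.erase_subset _ _
      rcases role _ hei (hsat _ hsubΩ hei) with
        ⟨B,hB,C,hC,D,hD,p1,p2,p3,p4,p5,p6⟩|⟨A,hA,B,hB,D,hD,p1,p2,p3,p4,p5,p6⟩|
        ⟨A,hA,B,hB,C,hC,p1,p2,p3,p4,p5,p6⟩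
      · have hiB : i ∈ B := by
          by_contra hiB
          exact p2 (fun x hx => Finset.mem_erase.2 ⟨fun e => hiB (e ▸ hx), hsub B hB hx⟩)
        have hCeq : C = Ω := by
          apply Finset.Subset.antisymm (hsub C hC)
          intro x hx
          by_cases hxi : x = i
          · rw [hxi]; exact p4 hiB
          · exact p3 (Finset.mem_erase.2 ⟨hxi, hx⟩)
        exact p6 (by rw [hCeq]; exact hsub D hD)
      · exact (noV D hD A hA B hB (p3.trans p5) (p4.trans p5)).elim p1 p2
      · exact (noV C hC A hA B hB p3 p4).elim p1 p2
    have h1Ω : (1:ℕ) ∈ Ω := by rw [hΩ]; exact Finset.mem_Icc.2 ⟨le_refl 1, by omega⟩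
    have h2Ω : (2:ℕ) ∈ Ω := by rw [hΩ]; exact Finset.mem_Icc.2 ⟨by omega, by omega⟩
    have hA := hco 1 h1Ω
    have hB := hco 2 h2Ω
    have h2A : (2:ℕ) ∈ Ω.erase 1 := Finset.mem_erase.2 ⟨by norm_num, h2Ω⟩
    have h1B : (1:ℕ) ∈ Ω.erase 2 := Finset.mem_erase.2 ⟨by norm_num, h1Ω⟩
    rcases noV Ω hΩF _ hA _ hB (Finset.erase_subset _ _) (Finset.erase_subset _ _) with h|h
    · exact (Finset.mem_erase.1 (h h2A)).1 rfl
    · exact (Finset.mem_erase.1 (h h1B)).1 rfl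
  -- minimal chain element containing i is an intro node
  have hmin : ∀ C ∈ F, Chainy F C → ∀ i, i ∈ C →
      ∃ E, IntroNode F E i ∧ E ⊆ C := by
    intro C hC hch i hiC
    obtain ⟨E, hE, hEmin⟩ := Finset.exists_min_image
      (F.filter (fun Z => Z ⊆ C ∧ i ∈ Z)) Finset.card
      ⟨C, Finset.mem_filter.2 ⟨hC, Finset.Subset.rfl, hiC⟩⟩
    obtain ⟨hEF, hEC, hiE⟩ := Finset.mem_filter.1 hE
    refine ⟨E, ⟨hEF, ?_, hiE, ?_⟩, hEC⟩
    · intro Z1 hZ1 hs1 Z2 hZ2 hs2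
      exact hch Z1 hZ1 (hs1.trans hEC) Z2 hZ2 (hs2.trans hEC)
    · intro Z hZ hZE hne hiZ
      have hle : E.card ≤ Z.card := hEmin Z (Finset.mem_filter.2 ⟨hZ, hZE.trans hEC, hiZ⟩)
      have hlt : Z.card < E.card := Finset.card_lt_card (lt_of_le_of_ne hZE hne)
      omega
  -- every i ∈ Ω has an intro node
  have hintro : ∀ i ∈ Ω, ∃ E, IntroNode F E i := by
    intro i hi
    by_cases hsing : {i} ∈ F
    · refine ⟨{i}, hsing, ?_, Finset.mem_singleton_self i, ?_⟩
      · intro Z1 _ hs1 Z2 _ hs2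
        rcases Finset.subset_singleton_iff.1 hs1 with rfl|rfl
        · exact Or.inl (Finset.empty_subset _)
        · exact Or.inr hs2
      · intro Z _ hZs hne
        rcases Finset.subset_singleton_iff.1 hZs with rfl|rfl
        · exact Finset.notMem_empty i
        · exact absurd rfl hne
    · have hiS : {i} ⊆ Ω := Finset.singleton_subset_iff.2 hi
      rcases role _ hsing (hsat _ hiS hsing) with
        ⟨B,hB,C,hC,D,hD,p1,p2,p3,p4,p5,p6⟩|⟨A,hA,B,hB,D,hD,p1,p2,p3,p4,p5,p6⟩|
        ⟨A,hA,B,hB,C,hC,p1,p2,p3,p4,p5,p6⟩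
      · obtain ⟨E, hE, -⟩ := hmin C hC (hslim C hC D hD p5 p6) i
          (p3 (Finset.mem_singleton_self i))
        exact ⟨E, hE⟩
      · rcases Finset.subset_singleton_iff.1 p3 with rfl|rfl
        · exact absurd (Finset.empty_subset B) p1
        · rcases Finset.subset_singleton_iff.1 p4 with rfl|rfl
          · exact absurd (Finset.empty_subset _) p2
          · exact absurd Finset.Subset.rfl p1
      · rcases Finset.subset_singleton_iff.1 (p3.trans p5) with rfl|rfl
        · exact absurd (Finset.empty_subset B) p1
        · rcases Finset.subset_singleton_iff.1 (p4.trans p5) with rfl|rfl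
          · exact absurd (Finset.empty_subset _) p2
          · exact absurd Finset.Subset.rfl p1
  -- the key lemma: two elements cannot share a μ-maximal intro node
  have hkey : ∀ i j X, i ≠ j → IntroNode F X i → IntroNode F X j →
      ∃ E, IntroNode F E i ∧
        (F.filter (fun Z => Z ⊆ X)).card < (F.filter (fun Z => Z ⊆ E)).card := by
    intro i j X hij hXi hXj
    obtain ⟨hXF, hXch, hiX, hXstr⟩ := hXi
    have hjX : j ∈ X := hXj.2.2.1
    -- maximal strict F-subset P of X
    have hne : (F.filter (fun Z => Z ⊆ X ∧ Z ≠ X)).Nonempty := by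
      refine ⟨∅, Finset.mem_filter.2 ⟨hempty, Finset.empty_subset X, ?_⟩⟩
      intro e
      rw [← e] at hiX
      exact absurd hiX (Finset.notMem_empty i)
    obtain ⟨P, hPmem, hPmax⟩ := Finset.exists_max_image _ Finset.card hne
    obtain ⟨hPF, hPX, hPne⟩ := Finset.mem_filter.1 hPmem
    have hPtop : ∀ Z ∈ F, Z ⊆ X → Z ≠ X → Z ⊆ P := by
      intro Z hZ hZX hZne
      rcases hXch Z hZ hZX P hPF hPX with h|h
      · exact h
      · have hZP := hPmax Z (Finset.mem_filter.2 ⟨hZ, hZX, hZne⟩)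
        have he : P = Z := Finset.eq_of_subset_of_card_le h hZP
        exact le_of_eq he.symm
    have hiP : i ∉ P := hXstr P hPF hPX hPne
    have hjP : j ∉ P := hXj.2.2.2 P hPF hPX hPne
    set S := insert i P with hSdef
    have hSX : S ⊆ X := Finset.insert_subset hiX hPX
    have hSneX : S ≠ X := by
      intro e
      have hjS : j ∈ S := by rw [e]; exact hjX
      rcases Finset.mem_insert.1 hjS with h|h
      · exact hij h.symm
      · exact hjP h
    have hSF : S ∉ F := by
      intro hSF
      exact hiP (hPtop S hSF hSX hSneX (Finset.mem_insert_self i P))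
    have hSΩ : S ⊆ Ω := hSX.trans (hsub X hXF)
    rcases role S hSF (hsat S hSΩ hSF) with
      ⟨B,hB,C,hC,D,hD,p1,p2,p3,p4,p5,p6⟩|⟨A,hA,B,hB,D,hD,p1,p2,p3,p4,p5,p6⟩|
      ⟨A,hA,B,hB,C,hC,p1,p2,p3,p4,p5,p6⟩
    · -- leg role: the interesting case
      have hchC : Chainy F C := hslim C hC D hD p5 p6
      have hiC : i ∈ C := p3 (Finset.mem_insert_self i P)
      have hPC : P ⊆ C := (Finset.subset_insert i P).trans p3
      have hPB : P ⊆ B := by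
        rcases hchC B hB p4 P hPF hPC with h|h
        · exact absurd (h.trans (Finset.subset_insert i P)) p2
        · exact h
      have hiB : i ∉ B := fun hiB => p1 (Finset.insert_subset hiB hPB)
      obtain ⟨E, hE, hEmin⟩ := Finset.exists_min_image
        (F.filter (fun Z => Z ⊆ C ∧ i ∈ Z)) Finset.card
        ⟨C, Finset.mem_filter.2 ⟨hC, Finset.Subset.rfl, hiC⟩⟩
      obtain ⟨hEF, hEC, hiE⟩ := Finset.mem_filter.1 hE
      have hEintro : IntroNode F E i := by
        refine ⟨hEF, ?_, hiE, ?_⟩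
        · intro Z1 hZ1 hs1 Z2 hZ2 hs2
          exact hchC Z1 hZ1 (hs1.trans hEC) Z2 hZ2 (hs2.trans hEC)
        · intro Z hZ hZE hne' hiZ
          have hle : E.card ≤ Z.card := hEmin Z (Finset.mem_filter.2 ⟨hZ, hZE.trans hEC, hiZ⟩)
          have hlt : Z.card < E.card := Finset.card_lt_card (lt_of_le_of_ne hZE hne')
          omega
      have hBE : B ⊆ E := by
        rcases hchC B hB p4 E hEF hEC with h|h
        · exact h
        · exact absurd (h hiE) hiB
      have hBneE : B ≠ E := fun e => hiB (by rw [e]; exact hiE)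
      have hBnX : ¬ B ⊆ X := by
        intro hBX
        have hBneX : B ≠ X := fun e => hiB (by rw [e]; exact hiX)
        exact p2 ((hPtop B hB hBX hBneX).trans (Finset.subset_insert i P))
      have hEnX : ¬ E ⊆ X := by
        intro hEX
        by_cases e : E = X
        · exact hBnX (by rw [← e]; exact hBE)
        · exact hiP ((hPtop E hEF hEX e) hiE)
      refine ⟨E, hEintro, ?_⟩
      have hsubset : insert B (insert E ((F.filter (fun Z => Z ⊆ X)).erase X)) ⊆
          F.filter (fun Z => Z ⊆ E) := by
        intro Z hZ
        rcases Finset.mem_insert.1 hZ with rfl|hZ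
        · exact Finset.mem_filter.2 ⟨hB, hBE⟩
        rcases Finset.mem_insert.1 hZ with rfl|hZ
        · exact Finset.mem_filter.2 ⟨hEF, Finset.Subset.rfl⟩
        · obtain ⟨hZne, hZmem⟩ := Finset.mem_erase.1 hZ
          obtain ⟨hZF, hZX⟩ := Finset.mem_filter.1 hZmem
          exact Finset.mem_filter.2 ⟨hZF, ((hPtop Z hZF hZX hZne).trans hPB).trans hBE⟩
      have hBni : B ∉ insert E ((F.filter (fun Z => Z ⊆ X)).erase X) := by
        intro h
        rcases Finset.mem_insert.1 h with e|h
        · exact hBneE e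
        · exact hBnX (Finset.mem_filter.1 (Finset.mem_of_mem_erase h)).2
      have hEni : E ∉ (F.filter (fun Z => Z ⊆ X)).erase X := by
        intro h
        exact hEnX (Finset.mem_filter.1 (Finset.mem_of_mem_erase h)).2
      have hXin : X ∈ F.filter (fun Z => Z ⊆ X) :=
        Finset.mem_filter.2 ⟨hXF, Finset.Subset.rfl⟩
      have hcard1 : (insert B (insert E ((F.filter (fun Z => Z ⊆ X)).erase X))).card =
          ((F.filter (fun Z => Z ⊆ X)).erase X).card + 2 := by
        rw [Finset.card_insert_of_notMem hBni, Finset.card_insert_of_notMem hEni]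
      have hcard2 : ((F.filter (fun Z => Z ⊆ X)).erase X).card =
          (F.filter (fun Z => Z ⊆ X)).card - 1 := Finset.card_erase_of_mem hXin
      have hle := Finset.card_le_card hsubset
      have hXpos : 1 ≤ (F.filter (fun Z => Z ⊆ X)).card := Finset.card_pos.2 ⟨X, hXin⟩
      omega
    · exact ((hXch A hA (p3.trans hSX) B hB (p4.trans hSX)).elim
        (fun h => absurd h p1) (fun h => absurd h p2))
    · exact ((hXch A hA ((p3.trans p5).trans hSX) B hB ((p4.trans p5).trans hSX)).elim
        (fun h => absurd h p1) (fun h => absurd h p2))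
  -- choose a μ-maximal intro node for each i
  have hchoice : ∀ i, ∃ X, i ∈ Ω → IntroNode F X i ∧
      ∀ X', IntroNode F X' i →
        (F.filter (fun Z => Z ⊆ X')).card ≤ (F.filter (fun Z => Z ⊆ X)).card := by
    intro i
    by_cases hi : i ∈ Ω
    · obtain ⟨E0, hE0⟩ := hintro i hi
      obtain ⟨X, hXmem, hXmax⟩ := Finset.exists_max_image
        (F.filter (fun X => IntroNode F X i))
        (fun X => (F.filter (fun Z => Z ⊆ X)).card)
        ⟨E0, Finset.mem_filter.2 ⟨hE0.1, hE0⟩⟩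
      exact ⟨X, fun _ => ⟨(Finset.mem_filter.1 hXmem).2,
        fun X' hX' => hXmax X' (Finset.mem_filter.2 ⟨hX'.1, hX'⟩)⟩⟩
    · exact ⟨∅, fun h => absurd h hi⟩
  choose g hg using hchoice
  have hginj : Set.InjOn g ↑Ω := by
    intro i hi j hj he
    by_contra hij
    obtain ⟨hXi, hXimax⟩ := hg i (Finset.mem_coe.1 hi)
    obtain ⟨hXj, -⟩ := hg j (Finset.mem_coe.1 hj)
    rw [← he] at hXj
    obtain ⟨E, hEi, hEgt⟩ := hkey i j (g i) hij hXi hXj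
    have := hXimax E hEi
    omega
  obtain ⟨V, hV, A, hA, B, hB, q1, q2, q3, q4⟩ := hVex
  have hVni : ∀ i ∈ Ω, g i ≠ V := by
    intro i hi e
    have hch : Chainy F (g i) := ((hg i hi).1).2.1
    rw [e] at hch
    exact (hch A hA q3 B hB q4).elim q1 q2
  have hVne : V ≠ ∅ := by
    intro e
    rw [e] at q3
    have hAe : A = ∅ := Finset.subset_empty.1 q3
    exact q1 (by rw [hAe]; exact Finset.empty_subset B)
  have hgne : ∀ i ∈ Ω, g i ≠ ∅ := by
    intro i hi e
    have hiX : i ∈ g i := ((hg i hi).1).2.2.1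
    rw [e] at hiX
    exact Finset.notMem_empty i hiX
  have hfinal : insert ∅ (insert V (Ω.image g)) ⊆ F := by
    intro X hX
    rcases Finset.mem_insert.1 hX with rfl|hX
    · exact hempty
    rcases Finset.mem_insert.1 hX with rfl|hX
    · exact hV
    · obtain ⟨i, hi, rfl⟩ := Finset.mem_image.1 hX
      exact ((hg i hi).1).1
  have hcardimg : (Ω.image g).card = n := by
    rw [Finset.card_image_of_injOn hginj, hΩ, Nat.card_Icc]
    omega
  have hc1 : (insert V (Ω.image g)).card = n + 1 := by
    rw [Finset.card_insert_of_notMem, hcardimg]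
    intro h
    obtain ⟨i, hi, e⟩ := Finset.mem_image.1 h
    exact hVni i hi e
  have hc2 : (insert ∅ (insert V (Ω.image g))).card = n + 2 := by
    rw [Finset.card_insert_of_notMem, hc1]
    intro h
    rcases Finset.mem_insert.1 h with e|h
    · exact hVne e.symm
    · obtain ⟨i, hi, e⟩ := Finset.mem_image.1 h
      exact hgne i hi e
  calc n + 2 = (insert ∅ (insert V (Ω.image g))).card := hc2.symm
    _ ≤ F.card := Finset.card_le_card hfinal
end

section
/- For every n ≥ 3, the family F = {F ⊆ [n] : |F| ≥ n-1 or |F| ≤ 1} is induced X-saturated and has exactly 2n + 2 elements; hence sat*(n, X) ≤ 2n + 2. -/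
/-- The poset `X`: two incomparable minimal elements below a middle element,
which lies below two incomparable maximal elements. -/
def posetX : Finset (Finset ℕ) := {{1}, {2}, {1, 2}, {1, 2, 3}, {1, 2, 4}}


section Aux
open Finset

lemma mem_posetX {A : Finset ℕ} :
    A ∈ posetX ↔ A = {1} ∨ A = {2} ∨ A = {1,2} ∨ A = {1,2,3} ∨ A = {1,2,4} := by
  simp [posetX]

lemma containsX (F : Finset (Finset ℕ)) (A1 A2 H M1 M2 : Finset ℕ)
    (m1 : A1 ∈ F) (m2 : A2 ∈ F) (mH : H ∈ F) (mM1 : M1 ∈ F) (mM2 : M2 ∈ F)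
    (h12 : ¬ A1 ⊆ A2) (h21 : ¬ A2 ⊆ A1)
    (h1H : A1 ⊆ H) (h2H : A2 ⊆ H) (hH1 : ¬ H ⊆ A1) (hH2 : ¬ H ⊆ A2)
    (hHM1 : H ⊆ M1) (hHM2 : H ⊆ M2) (hM1H : ¬ M1 ⊆ H) (hM2H : ¬ M2 ⊆ H)
    (hMM : ¬ M1 ⊆ M2) (hMM' : ¬ M2 ⊆ M1) :
    ContainsInduced posetX F := by
  classical
  set φ : Finset ℕ → Finset ℕ := fun A =>
    if A = {1} then A1 else if A = {2} then A2 else if A = {1,2} then H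
    else if A = {1,2,3} then M1 else M2 with hφ
  have e1 : φ {1} = A1 := by simp [hφ]
  have e2 : φ {2} = A2 := by
    rw [hφ]; simp only []
    rw [if_neg (by decide)]; simp
  have e3 : φ {1,2} = H := by
    rw [hφ]; simp only []
    rw [if_neg (by decide), if_neg (by decide)]; simp
  have e4 : φ {1,2,3} = M1 := by
    rw [hφ]; simp only []
    rw [if_neg (by decide), if_neg (by decide), if_neg (by decide)]; simp
  have e5 : φ {1,2,4} = M2 := by
    rw [hφ]; simp only []
    rw [if_neg (by decide), if_neg (by decide), if_neg (by decide), if_neg (by decide)]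
  have t1 : A1 ⊆ M1 := h1H.trans hHM1
  have t2 : A1 ⊆ M2 := h1H.trans hHM2
  have t3 : A2 ⊆ M1 := h2H.trans hHM1
  have t4 : A2 ⊆ M2 := h2H.trans hHM2
  have f1 : ¬ M1 ⊆ A1 := fun h => hM1H (h.trans h1H)
  have f2 : ¬ M1 ⊆ A2 := fun h => hM1H (h.trans h2H)
  have f3 : ¬ M2 ⊆ A1 := fun h => hM2H (h.trans h1H)
  have f4 : ¬ M2 ⊆ A2 := fun h => hM2H (h.trans h2H)
  have hiff : ∀ A ∈ posetX, ∀ B ∈ posetX, (φ A ⊆ φ B ↔ A ⊆ B) := by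
    intro A hA B hB
    rw [mem_posetX] at hA hB
    rcases hA with rfl|rfl|rfl|rfl|rfl <;> rcases hB with rfl|rfl|rfl|rfl|rfl <;>
      simp only [e1,e2,e3,e4,e5] <;>
      first
        | exact iff_of_true Finset.Subset.rfl (by decide)
        | exact iff_of_true (by assumption) (by decide)
        | exact iff_of_false (by assumption) (by decide)
  refine ⟨φ, ?_, ?_, hiff⟩
  · intro x hx y hy hxy
    have hx' : x ∈ posetX := hx
    have hy' : y ∈ posetX := hy
    exact Finset.Subset.antisymm
      ((hiff x hx' y hy').mp (by rw [hxy]))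
      ((hiff y hy' x hx').mp (by rw [hxy]))
  · intro A hA
    rw [mem_posetX] at hA
    rcases hA with rfl|rfl|rfl|rfl|rfl <;>
      simp only [e1,e2,e3,e4,e5] <;> assumption

lemma no_copy (n : ℕ) (hn : 3 ≤ n)
    (h : ContainsInduced posetX
      ((Finset.Icc 1 n).powerset.filter fun S => n - 1 ≤ S.card ∨ S.card ≤ 1)) : False := by
  obtain ⟨φ, hinj, hmem, hiff⟩ := h
  have p1 : ({1} : Finset ℕ) ∈ posetX := by decide
  have p2 : ({2} : Finset ℕ) ∈ posetX := by decide
  have pH : ({1,2} : Finset ℕ) ∈ posetX := by decide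
  have pM1 : ({1,2,3} : Finset ℕ) ∈ posetX := by decide
  have pM2 : ({1,2,4} : Finset ℕ) ∈ posetX := by decide
  have h12 : ¬ φ {1} ⊆ φ {2} := fun hs => by
    have := (hiff _ p1 _ p2).mp hs; revert this; decide
  have h21 : ¬ φ {2} ⊆ φ {1} := fun hs => by
    have := (hiff _ p2 _ p1).mp hs; revert this; decide
  have h1H : φ {1} ⊆ φ {1,2} := (hiff _ p1 _ pH).mpr (by decide)
  have h2H : φ {2} ⊆ φ {1,2} := (hiff _ p2 _ pH).mpr (by decide)
  have hHM1 : φ {1,2} ⊆ φ {1,2,3} := (hiff _ pH _ pM1).mpr (by decide)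
  have hHM2 : φ {1,2} ⊆ φ {1,2,4} := (hiff _ pH _ pM2).mpr (by decide)
  have hM1H : ¬ φ {1,2,3} ⊆ φ {1,2} := fun hs => by
    have := (hiff _ pM1 _ pH).mp hs; revert this; decide
  have hM2H : ¬ φ {1,2,4} ⊆ φ {1,2} := fun hs => by
    have := (hiff _ pM2 _ pH).mp hs; revert this; decide
  have hMM : ¬ φ {1,2,3} ⊆ φ {1,2,4} := fun hs => by
    have := (hiff _ pM1 _ pM2).mp hs; revert this; decide
  -- extract membership info
  have mem' : ∀ A ∈ posetX, φ A ⊆ Finset.Icc 1 n ∧ (n - 1 ≤ (φ A).card ∨ (φ A).card ≤ 1) := by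
    intro A hA
    have := hmem A hA
    simpa using Finset.mem_filter.mp this
  -- x ∈ φ{1} \ φ{2}, y ∈ φ{2} \ φ{1}
  obtain ⟨x, hx1, hx2⟩ := Finset.not_subset.mp h12
  obtain ⟨y, hy2, hy1⟩ := Finset.not_subset.mp h21
  have hxy : x ≠ y := fun h => hx2 (h ▸ hy2)
  have hpair : ({x, y} : Finset ℕ) ⊆ φ {1,2} := by
    intro z hz
    rcases Finset.mem_insert.mp hz with rfl | hz
    · exact h1H hx1
    · exact h2H (Finset.mem_singleton.mp hz ▸ hy2)
  have hcard2 : 2 ≤ (φ {1,2}).card := by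
    calc 2 = ({x, y} : Finset ℕ).card := (Finset.card_pair hxy).symm
    _ ≤ _ := Finset.card_le_card hpair
  have hHcard : n - 1 ≤ (φ {1,2}).card := by
    rcases (mem' _ pH).2 with h | h
    · exact h
    · omega
  have key : ∀ M ∈ posetX, φ {1,2} ⊆ φ M → ¬ φ M ⊆ φ {1,2} → φ M = Finset.Icc 1 n := by
    intro M hM hsub hns
    have hne : φ {1,2} ≠ φ M := fun h => hns (h ▸ Finset.Subset.refl _)
    have hlt : (φ {1,2}).card < (φ M).card :=
      Finset.card_lt_card (Finset.ssubset_iff_subset_ne.mpr ⟨hsub, hne⟩)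
    have hle : (Finset.Icc 1 n).card ≤ (φ M).card := by
      rw [Nat.card_Icc]; omega
    exact Finset.eq_of_subset_of_card_le (mem' _ hM).1 hle
  have e1 := key _ pM1 hHM1 hM1H
  have e2 := key _ pM2 hHM2 hM2H
  exact hMM (by rw [e1, e2])

lemma card_Fn (n : ℕ) (hn : 3 ≤ n) :
    ((Finset.Icc 1 n).powerset.filter fun S => n - 1 ≤ S.card ∨ S.card ≤ 1).card
      = 2 * n + 2 := by
  set s := Finset.Icc 1 n with hs
  have hscard : s.card = n := by rw [hs, Nat.card_Icc]; omega
  have hunion : (s.powerset.filter fun S => n - 1 ≤ S.card ∨ S.card ≤ 1)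
      = s.powersetCard 0 ∪ s.powersetCard 1 ∪ s.powersetCard (n-1) ∪ s.powersetCard n := by
    ext S
    simp only [mem_filter, mem_powerset, mem_union, mem_powersetCard]
    constructor
    · rintro ⟨hsub, h⟩
      have hle : S.card ≤ n := hscard ▸ card_le_card hsub
      have : S.card = 0 ∨ S.card = 1 ∨ S.card = n - 1 ∨ S.card = n := by omega
      rcases this with h' | h' | h' | h'
      · exact Or.inl (Or.inl (Or.inl ⟨hsub, h'⟩))
      · exact Or.inl (Or.inl (Or.inr ⟨hsub, h'⟩))
      · exact Or.inl (Or.inr ⟨hsub, h'⟩)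
      · exact Or.inr ⟨hsub, h'⟩
    · rintro (((⟨h1, h2⟩ | ⟨h1, h2⟩) | ⟨h1, h2⟩) | ⟨h1, h2⟩) <;> exact ⟨h1, by omega⟩
  rw [hunion]
  have d1 : Disjoint (s.powersetCard 0 ∪ s.powersetCard 1 ∪ s.powersetCard (n-1))
      (s.powersetCard n) := by
    simp only [disjoint_union_left]
    refine ⟨⟨?_, ?_⟩, ?_⟩ <;> rw [Finset.disjoint_left] <;> intro a ha hb <;>
      simp only [mem_powersetCard] at ha hb <;> omega
  have d2 : Disjoint (s.powersetCard 0 ∪ s.powersetCard 1) (s.powersetCard (n-1)) := by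
    simp only [disjoint_union_left]
    refine ⟨?_, ?_⟩ <;> rw [Finset.disjoint_left] <;> intro a ha hb <;>
      simp only [mem_powersetCard] at ha hb <;> omega
  have d3 : Disjoint (s.powersetCard 0) (s.powersetCard 1) := by
    rw [Finset.disjoint_left]; intro a ha hb
    simp only [mem_powersetCard] at ha hb; omega
  rw [card_union_of_disjoint d1, card_union_of_disjoint d2, card_union_of_disjoint d3]
  simp only [card_powersetCard, hscard]
  rw [Nat.choose_zero_right, Nat.choose_one_right, Nat.choose_self,
    Nat.choose_symm (by omega : 1 ≤ n), Nat.choose_one_right]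
  omega

lemma saturation (n : ℕ) (hn : 3 ≤ n) (S : Finset ℕ) (hS : S ⊆ Finset.Icc 1 n)
    (hSn : S ∉ (Finset.Icc 1 n).powerset.filter fun T => n - 1 ≤ T.card ∨ T.card ≤ 1) :
    ContainsInduced posetX
      (insert S ((Finset.Icc 1 n).powerset.filter fun T => n - 1 ≤ T.card ∨ T.card ≤ 1)) := by
  set s := Finset.Icc 1 n with hs
  set Fn := s.powerset.filter fun T => n - 1 ≤ T.card ∨ T.card ≤ 1 with hFn
  have hscard : s.card = n := by rw [hs, Nat.card_Icc]; omega
  have hcond : ¬ (n - 1 ≤ S.card ∨ S.card ≤ 1) := by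
    intro h
    exact hSn (mem_filter.mpr ⟨mem_powerset.mpr hS, h⟩)
  have hc2 : 2 ≤ S.card := by omega
  have hcn : S.card ≤ n - 2 := by omega
  obtain ⟨a, ha, b, hb, hab⟩ := Finset.one_lt_card.mp hc2
  have hTcard : 2 ≤ (s \ S).card := by
    rw [card_sdiff_of_subset hS, hscard]; omega
  obtain ⟨c, hc, d, hd, hcd⟩ := Finset.one_lt_card.mp hTcard
  obtain ⟨hcs, hcS⟩ := Finset.mem_sdiff.mp hc
  obtain ⟨hds, hdS⟩ := Finset.mem_sdiff.mp hd
  set M1 := s.erase c with hM1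
  set M2 := s.erase d with hM2
  have hM1card : M1.card = n - 1 := by rw [hM1, card_erase_of_mem hcs, hscard]
  have hM2card : M2.card = n - 1 := by rw [hM2, card_erase_of_mem hds, hscard]
  have hM1mem : M1 ∈ Fn := mem_filter.mpr ⟨mem_powerset.mpr (erase_subset _ _), Or.inl (by omega)⟩
  have hM2mem : M2 ∈ Fn := mem_filter.mpr ⟨mem_powerset.mpr (erase_subset _ _), Or.inl (by omega)⟩
  have hamem : ({a} : Finset ℕ) ∈ Fn := mem_filter.mpr
    ⟨mem_powerset.mpr (singleton_subset_iff.mpr (hS ha)), Or.inr (by simp)⟩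
  have hbmem : ({b} : Finset ℕ) ∈ Fn := mem_filter.mpr
    ⟨mem_powerset.mpr (singleton_subset_iff.mpr (hS hb)), Or.inr (by simp)⟩
  have hSM1 : S ⊆ M1 := fun x hx => mem_erase.mpr ⟨fun h => hcS (h ▸ hx), hS hx⟩
  have hSM2 : S ⊆ M2 := fun x hx => mem_erase.mpr ⟨fun h => hdS (h ▸ hx), hS hx⟩
  have hdM1 : d ∈ M1 := mem_erase.mpr ⟨fun h => hcd h.symm, hds⟩
  have hcM2 : c ∈ M2 := mem_erase.mpr ⟨hcd, hcs⟩
  refine containsX _ {a} {b} S M1 M2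
    (Finset.mem_insert_of_mem hamem) (Finset.mem_insert_of_mem hbmem)
    (Finset.mem_insert_self _ _)
    (Finset.mem_insert_of_mem hM1mem) (Finset.mem_insert_of_mem hM2mem)
    ?_ ?_ (singleton_subset_iff.mpr ha) (singleton_subset_iff.mpr hb) ?_ ?_
    hSM1 hSM2 ?_ ?_ ?_ ?_
  · rw [singleton_subset_iff, mem_singleton]; exact hab
  · rw [singleton_subset_iff, mem_singleton]; exact fun h => hab h.symm
  · intro h
    have := card_le_card h
    simp at this; omega
  · intro h
    have := card_le_card h
    simp at this; omega
  · exact fun h => hdS (h hdM1)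
  · exact fun h => hcS (h hcM2)
  · exact fun h => Finset.notMem_erase d s (h hdM1)
  · exact fun h => Finset.notMem_erase c s (h hcM2)

end Aux

/-- For `n ≥ 3`, the family `{F ⊆ [n] : |F| ≥ n-1 or |F| ≤ 1}` is induced `X`-saturated
with exactly `2n + 2` elements; hence `sat*(n, X) ≤ 2n + 2`. -/
theorem x_saturated_upper_bound (n : ℕ) (hn : 3 ≤ n) :
    InducedSaturated n posetX
      ((Finset.Icc 1 n).powerset.filter fun S => n - 1 ≤ S.card ∨ S.card ≤ 1) ∧
    ((Finset.Icc 1 n).powerset.filter fun S => n - 1 ≤ S.card ∨ S.card ≤ 1).card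
      = 2 * n + 2 ∧
    satStar n posetX ≤ 2 * n + 2 := by
  have hsat : InducedSaturated n posetX
      ((Finset.Icc 1 n).powerset.filter fun S => n - 1 ≤ S.card ∨ S.card ≤ 1) := by
    refine ⟨?_, no_copy n hn, saturation n hn⟩
    intro A hA
    exact Finset.mem_powerset.mp (Finset.mem_filter.mp hA).1
  exact ⟨hsat, card_Fn n hn, Nat.sInf_le ⟨_, hsat, card_Fn n hn⟩⟩
end
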